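/- arXiv:1612.08637 — 5 statements merged into one kernel-verified Lean document; each statement's English description precedes it below -/
import Mathlib

section
/- Let U, V ⊂ ℝⁿ be 0-symmetric convex bodies, H = (1/2)U, K = V + H (Minkowski sum). If X ⊂ ℝⁿ is a finite set with K ⊆ H + X, then for every continuous non-negative positive definite f : ℝⁿ → ℝ one has ∫_V f(x) dx ≤ |X| ∫_U f(x) dx. -/
open MeasureTheory Complex Pointwise

noncomputable section

/-- A continuous-type positive definiteness condition for complex-valued
functions on `ℝⁿ`: all finite quadratic forms are real and nonnegative. -/
def IsPosDefC {n : ℕ} (f : (Fin n → ℝ) → ℂ) : Prop :=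
  ∀ (X : Finset (Fin n → ℝ)) (c : (Fin n → ℝ) → ℂ),
    0 ≤ (∑ a ∈ X, ∑ b ∈ X, c a * (starRingEnd ℂ) (c b) * f (a - b)).re ∧
    (∑ a ∈ X, ∑ b ∈ X, c a * (starRingEnd ℂ) (c b) * f (a - b)).im = 0

/-- Positive definiteness for real-valued functions on `ℝⁿ`. -/
def IsPosDefR {n : ℕ} (f : (Fin n → ℝ) → ℝ) : Prop :=
  IsPosDefC (fun x => (f x : ℂ))

/-- The set of ratios `(|V|⁻¹ ∫_V f) / (|U|⁻¹ ∫_U f)` over nonzero continuous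
non-negative positive definite `f`. -/
def ratioSet (n : ℕ) (U V : Set (Fin n → ℝ)) : Set ℝ :=
  { c | ∃ f : (Fin n → ℝ) → ℝ, Continuous f ∧ (∀ x, 0 ≤ f x) ∧ IsPosDefR f ∧
      f ≠ 0 ∧ 0 < ∫ x in U, f x ∧
      c = ((volume V).toReal⁻¹ * ∫ x in V, f x) /
          ((volume U).toReal⁻¹ * ∫ x in U, f x) }

/-- The sharp constant `C_n(U,V)` in the doubling-type condition at the origin. -/
def doublingConst (n : ℕ) (U V : Set (Fin n → ℝ)) : ℝ := sSup (ratioSet n U V)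

/-- A `0`-symmetric convex body in `ℝⁿ`. -/
def IsSymConvexBody {n : ℕ} (U : Set (Fin n → ℝ)) : Prop :=
  Convex ℝ U ∧ IsCompact U ∧ (interior U).Nonempty ∧ U = -U

variable {n : ℕ}

/-- f is even. -/
lemma IsPosDefR.even {f : (Fin n → ℝ) → ℝ} (hpd : IsPosDefR f) (y : Fin n → ℝ) :
    f (-y) = f y := by
  rcases eq_or_ne y 0 with rfl | hy
  · simp
  have h0y : (0 : Fin n → ℝ) ≠ y := fun h => hy h.symm
  have := (hpd {0, y} (fun p => if p = 0 then 1 else I)).2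
  rw [Finset.sum_pair h0y] at this
  rw [Finset.sum_pair h0y, Finset.sum_pair h0y] at this
  simp only [if_pos rfl, if_neg hy, sub_zero, zero_sub, sub_self, map_one,
    Complex.conj_I, one_mul, mul_one, mul_neg] at this
  simp only [Complex.add_im, Complex.mul_im, Complex.neg_im, Complex.neg_re,
    Complex.ofReal_re, Complex.ofReal_im, Complex.I_re, Complex.I_im] at this
  norm_num at this
  linarith

/-- The key discrete quadratic-form inequality with multiplicities. -/
lemma IsPosDefR.sum_form {f : (Fin n → ℝ) → ℝ} (hpd : IsPosDefR f)
    (x : Fin n → ℝ) {m : ℕ} (s : Fin m → (Fin n → ℝ)) :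
    0 ≤ ∑ k : Fin m, ∑ l : Fin m,
      (2 * f (s k - s l) - f (s k - s l + x) - f (s k - s l - x)) := by
  classical
  set T : Finset (Fin n → ℝ) :=
    (Finset.univ.image s) ∪ (Finset.univ.image fun k => s k + x) with hT
  set c : (Fin n → ℝ) → ℂ := fun p =>
    ∑ k : Fin m, ((if s k = p then (1:ℂ) else 0) - (if s k + x = p then (1:ℂ) else 0)) with hc
  have hmemT1 : ∀ k, s k ∈ T := fun k =>
    Finset.mem_union_left _ (Finset.mem_image_of_mem s (Finset.mem_univ k))
  have hmemT2 : ∀ k, s k + x ∈ T := fun k =>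
    Finset.mem_union_right _ (Finset.mem_image_of_mem _ (Finset.mem_univ k))
  have key : ∀ g : (Fin n → ℝ) → ℂ,
      ∑ a ∈ T, c a * g a = ∑ k : Fin m, (g (s k) - g (s k + x)) := by
    intro g
    have hterm : ∀ a ∈ T, c a * g a
        = ∑ k : Fin m, ((if s k = a then g a else 0) - (if s k + x = a then g a else 0)) := by
      intro a _
      rw [hc]
      rw [Finset.sum_mul]
      refine Finset.sum_congr rfl fun k _ => ?_
      rw [sub_mul]
      congr 1 <;> (split_ifs <;> simp)
    rw [Finset.sum_congr rfl hterm, Finset.sum_comm]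
    refine Finset.sum_congr rfl fun k _ => ?_
    rw [Finset.sum_sub_distrib, Finset.sum_ite_eq T (s k) g, Finset.sum_ite_eq T (s k + x) g,
      if_pos (hmemT1 k), if_pos (hmemT2 k)]
  have hconj : ∀ p, (starRingEnd ℂ) (c p) = c p := by
    intro p
    simp only [hc, map_sum, map_sub, apply_ite (starRingEnd ℂ), map_one, map_zero]
  have h1 := (hpd T c).1
  have hS : ∑ a ∈ T, ∑ b ∈ T, c a * (starRingEnd ℂ) (c b) * (f (a - b) : ℂ)
      = ∑ k : Fin m, ∑ l : Fin m,
        (2 * (f (s k - s l) : ℂ) - (f (s k - s l + x) : ℂ) - (f (s k - s l - x) : ℂ)) := by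
    have step1 : ∀ a, ∑ b ∈ T, c a * (starRingEnd ℂ) (c b) * (f (a - b) : ℂ)
        = c a * ∑ l : Fin m, ((f (a - s l) : ℂ) - (f (a - (s l + x)) : ℂ)) := by
      intro a
      rw [← key (fun b => (f (a - b) : ℂ))]
      rw [Finset.mul_sum]
      refine Finset.sum_congr rfl fun b _ => ?_
      rw [hconj]; ring
    calc ∑ a ∈ T, ∑ b ∈ T, c a * (starRingEnd ℂ) (c b) * (f (a - b) : ℂ)
        = ∑ a ∈ T, c a * ∑ l : Fin m, ((f (a - s l) : ℂ) - (f (a - (s l + x)) : ℂ)) :=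
          Finset.sum_congr rfl fun a _ => step1 a
      _ = ∑ k : Fin m, ((∑ l : Fin m, ((f (s k - s l) : ℂ) - (f (s k - (s l + x)) : ℂ)))
            - ∑ l : Fin m, ((f (s k + x - s l) : ℂ) - (f (s k + x - (s l + x)) : ℂ))) :=
          key _
      _ = _ := by
          refine Finset.sum_congr rfl fun k _ => ?_
          rw [← Finset.sum_sub_distrib]
          refine Finset.sum_congr rfl fun l _ => ?_
          have e1 : s k - (s l + x) = s k - s l - x := by abel
          have e2 : s k + x - s l = s k - s l + x := by abel
          have e3 : s k + x - (s l + x) = s k - s l := by abel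
          rw [e1, e2, e3]; ring
  rw [hS] at h1
  calc (0:ℝ) ≤ (∑ k : Fin m, ∑ l : Fin m,
        (2 * (f (s k - s l) : ℂ) - (f (s k - s l + x) : ℂ) - (f (s k - s l - x) : ℂ))).re := h1
    _ = _ := by
        rw [Complex.re_sum]
        refine Finset.sum_congr rfl fun k _ => ?_
        rw [Complex.re_sum]
        refine Finset.sum_congr rfl fun l _ => ?_
        simp [Complex.sub_re, Complex.mul_re]

/-- f is bounded by f 0. -/
lemma IsPosDefR.le_zero {f : (Fin n → ℝ) → ℝ} (hpd : IsPosDefR f) (y : Fin n → ℝ) :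
    f y ≤ f 0 := by
  have := hpd.sum_form y (fun _ : Fin 1 => 0)
  simp only [Finset.sum_const, Finset.card_univ, Fintype.card_fin, one_smul,
    Fin.sum_univ_one, sub_self, zero_add, zero_sub] at this
  have he := hpd.even y
  linarith

section Part2

open Filter

variable {α : Type*} [MeasurableSpace α]

/-- Two-coordinate marginal of a finite product measure. -/
lemma pi_marginal_two (μ : Measure α) [IsFiniteMeasure μ]
    (h0 : μ Set.univ ≠ 0) {m : ℕ} {k l : Fin m} (hkl : k ≠ l)
    {F : α × α → ℝ} (hF : StronglyMeasurable F) :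
    ∫ s, F (s k, s l) ∂(Measure.pi fun _ : Fin m => μ)
      = (μ Set.univ ^ (m - 2)).toReal * ∫ p, F p ∂(μ.prod μ) := by
  classical
  set P := Measure.pi fun _ : Fin m => μ with hP
  have hT : Measurable (fun s : Fin m → α => (s k, s l)) :=
    (measurable_pi_apply k).prodMk (measurable_pi_apply l)
  have hpow0 : μ Set.univ ^ (m - 2) ≠ 0 := pow_ne_zero _ h0
  have hpowtop : μ Set.univ ^ (m - 2) ≠ ⊤ := ENNReal.pow_ne_top (measure_ne_top μ _)
  have hrect : ∀ A B : Set α, MeasurableSet A → MeasurableSet B →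
      Measure.map (fun s : Fin m → α => (s k, s l)) P (A ×ˢ B)
        = μ Set.univ ^ (m - 2) * (μ A * μ B) := by
    intro A B hA hB
    rw [Measure.map_apply hT (hA.prod hB)]
    have hpre : (fun s : Fin m → α => (s k, s l)) ⁻¹' (A ×ˢ B)
        = Set.pi Set.univ (fun i => if i = k then A else if i = l then B else Set.univ) := by
      ext s
      simp only [Set.mem_preimage, Set.mem_prod, Set.mem_pi, Set.mem_univ, true_implies]
      constructor
      · rintro ⟨h1, h2⟩ i
        by_cases hik : i = k
        · subst hik; rw [if_pos rfl]; exact h1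
        · rw [if_neg hik]
          by_cases hil : i = l
          · subst hil; rw [if_pos rfl]; exact h2
          · rw [if_neg hil]; trivial
      · intro h
        refine ⟨?_, ?_⟩
        · have := h k; rwa [if_pos rfl] at this
        · have := h l; rwa [if_neg (Ne.symm hkl), if_pos rfl] at this
    rw [hpre, Measure.pi_pi]
    have hout : ∀ i ∈ Finset.univ \ ({k, l} : Finset (Fin m)),
        μ (if i = k then A else if i = l then B else Set.univ) = μ Set.univ := by
      intro i hi
      simp only [Finset.mem_sdiff, Finset.mem_insert, Finset.mem_singleton, not_or] at hi
      rw [if_neg hi.2.1, if_neg hi.2.2]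
    rw [← Finset.prod_sdiff (Finset.subset_univ ({k, l} : Finset (Fin m))),
      Finset.prod_congr rfl hout, Finset.prod_const, Finset.prod_pair hkl,
      if_pos rfl, if_neg (Ne.symm hkl), if_pos rfl]
    have hcard : (Finset.univ \ ({k, l} : Finset (Fin m))).card = m - 2 := by
      rw [Finset.card_sdiff_of_subset (Finset.subset_univ _), Finset.card_pair hkl, Finset.card_univ,
        Fintype.card_fin]
    rw [hcard]
  have hprodeq : μ.prod μ
      = (μ Set.univ ^ (m - 2))⁻¹ • Measure.map (fun s : Fin m → α => (s k, s l)) P :=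
    Measure.prod_eq fun A B hA hB => by
      rw [Measure.smul_apply, hrect A B hA hB, smul_eq_mul, ← mul_assoc,
        ENNReal.inv_mul_cancel hpow0 hpowtop, one_mul]
  have hmap : Measure.map (fun s : Fin m → α => (s k, s l)) P
      = (μ Set.univ ^ (m - 2)) • μ.prod μ := by
    rw [hprodeq, smul_smul, ENNReal.mul_inv_cancel hpow0 hpowtop, one_smul]
  rw [← integral_map hT.aemeasurable hF.aestronglyMeasurable, hmap, integral_smul_measure,
    smul_eq_mul]

/-- Positivity of the double set-integral of a discretely positive definite kernel. -/
lemma kernel_integral_nonneg {n : ℕ} {ψ : (Fin n → ℝ) → ℝ} (hmeas : Measurable ψ) (Cb : ℝ)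
    (hCb : ∀ y, |ψ y| ≤ Cb) {H : Set (Fin n → ℝ)} (hfin : volume H ≠ ⊤)
    (hform : ∀ (m : ℕ) (s : Fin m → (Fin n → ℝ)), 0 ≤ ∑ k : Fin m, ∑ l : Fin m, ψ (s k - s l)) :
    0 ≤ ∫ a in H, ∫ b in H, ψ (a - b) := by
  classical
  set μ := (volume : Measure (Fin n → ℝ)).restrict H with hμ
  haveI : IsFiniteMeasure μ := ⟨by rw [Measure.restrict_apply_univ]; exact hfin.lt_top⟩
  have hμuniv : μ Set.univ = volume H := Measure.restrict_apply_univ H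
  by_cases h0 : volume H = 0
  · have hz : μ = 0 := by rw [hμ, Measure.restrict_eq_zero]; exact h0
    rw [hz]
    simp
  set F : (Fin n → ℝ) × (Fin n → ℝ) → ℝ := fun p => ψ (p.1 - p.2) with hF
  have hFm : StronglyMeasurable F :=
    (hmeas.comp (measurable_fst.sub measurable_snd)).stronglyMeasurable
  have hFint : Integrable F (μ.prod μ) :=
    Integrable.mono' (integrable_const Cb) hFm.aestronglyMeasurable
      (Filter.Eventually.of_forall fun p => by simpa using hCb _)
  set Jp := ∫ p, F p ∂(μ.prod μ) with hJpdef
  have hiter : ∫ a in H, ∫ b in H, ψ (a - b) = Jp := (integral_prod F hFint).symm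
  rw [hiter]
  set c := (volume H).toReal with hcdef
  have hc : 0 < c := ENNReal.toReal_pos h0 hfin
  have hkey : ∀ j : ℕ, 0 ≤ ψ 0 * c ^ 2 + ((j : ℝ) + 1) * Jp := by
    intro j
    set m := j + 2 with hm
    set P := Measure.pi fun _ : Fin m => μ with hPdef
    haveI : IsFiniteMeasure P :=
      ⟨by rw [hPdef, Measure.pi_univ]; exact ENNReal.prod_lt_top fun i _ => measure_lt_top μ _⟩
    have hint : ∀ k l : Fin m, Integrable (fun s : Fin m → (Fin n → ℝ) => ψ (s k - s l)) P := by
      intro k l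
      refine Integrable.mono' (integrable_const Cb)
        ((hmeas.comp ((measurable_pi_apply k).sub (measurable_pi_apply l))).stronglyMeasurable).aestronglyMeasurable
        (Filter.Eventually.of_forall fun s => by simpa using hCb _)
    have hpos : 0 ≤ ∫ s, (∑ k : Fin m, ∑ l : Fin m, ψ (s k - s l)) ∂P :=
      integral_nonneg fun s => hform m s
    rw [integral_finset_sum _ fun k _ => integrable_finset_sum _ fun l _ => hint k l] at hpos
    rw [Finset.sum_congr rfl
      (fun k _ => integral_finset_sum Finset.univ fun l (_ : l ∈ Finset.univ) => hint k l)] at hpos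
    have hval : ∀ k l : Fin m, ∫ s, ψ (s k - s l) ∂P
        = if k = l then ψ 0 * c ^ m else c ^ (m - 2) * Jp := by
      intro k l
      split_ifs with hkl
      · subst hkl
        simp only [sub_self]
        rw [integral_const, measureReal_def, hPdef, Measure.pi_univ, Finset.prod_const, Finset.card_univ,
          Fintype.card_fin, hμuniv, smul_eq_mul, ENNReal.toReal_pow, mul_comm]
      · have := pi_marginal_two μ (by rw [hμuniv]; exact h0) hkl hFm
        rw [hμuniv, ENNReal.toReal_pow] at this
        exact this
    rw [Finset.sum_congr rfl
      (fun k _ => Finset.sum_congr rfl fun l _ => hval k l)] at hpos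
    have hinner : ∀ k : Fin m, ∑ l : Fin m, (if k = l then ψ 0 * c ^ m else c ^ (m - 2) * Jp)
        = (m : ℝ) * (c ^ (m - 2) * Jp) + (ψ 0 * c ^ m - c ^ (m - 2) * Jp) := by
      intro k
      have : ∀ l : Fin m, (if k = l then ψ 0 * c ^ m else c ^ (m - 2) * Jp)
          = c ^ (m - 2) * Jp + (if k = l then ψ 0 * c ^ m - c ^ (m - 2) * Jp else 0) := by
        intro l; split_ifs <;> ring
      rw [Finset.sum_congr rfl fun l _ => this l, Finset.sum_add_distrib,
        Finset.sum_ite_eq Finset.univ k (fun _ => ψ 0 * c ^ m - c ^ (m - 2) * Jp),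
        if_pos (Finset.mem_univ k), Finset.sum_const, Finset.card_univ, Fintype.card_fin]
      push_cast; ring
    rw [Finset.sum_congr rfl fun k _ => hinner k, Finset.sum_const, Finset.card_univ,
      Fintype.card_fin] at hpos
    have hm2 : m - 2 = j := by simp [hm]
    have hmc : (m : ℝ) = (j : ℝ) + 2 := by push_cast [hm]; ring
    rw [hm2] at hpos
    have hcm : c ^ m = c ^ j * c ^ 2 := by rw [hm, pow_add]
    rw [hcm, hmc, nsmul_eq_mul, hmc] at hpos
    have hcj : 0 < c ^ j := pow_pos hc j
    have hj2 : (0:ℝ) < (j:ℝ) + 2 := by positivity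
    have h1 : 0 ≤ ((j:ℝ) + 2) * (c ^ j * Jp) + (ψ 0 * (c ^ j * c ^ 2) - c ^ j * Jp) := by
      by_contra h
      push_neg at h
      have := mul_neg_of_pos_of_neg hj2 h
      linarith
    have hA : ((j:ℝ) + 2) * (c ^ j * Jp) + (ψ 0 * (c ^ j * c ^ 2) - c ^ j * Jp)
        = c ^ j * (ψ 0 * c ^ 2 + ((j:ℝ) + 1) * Jp) := by ring
    rw [hA] at h1
    by_contra h
    push_neg at h
    have := mul_neg_of_pos_of_neg hcj h
    linarith
  by_contra hJ
  push_neg at hJ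
  obtain ⟨j, hj⟩ := exists_nat_gt ((ψ 0 * c ^ 2) / (-Jp))
  have hk := hkey j
  have hJp : 0 < -Jp := neg_pos.2 hJ
  rw [div_lt_iff₀ hJp] at hj
  nlinarith [hk, hj, hJp]

end Part2

section Part3

variable {n : ℕ}

/-- Bounded measurable functions are integrable on finite-measure sets. -/
lemma integrableOn_of_bdd {g : (Fin n → ℝ) → ℝ} (hg : AEStronglyMeasurable g volume) {C : ℝ}
    (hb : ∀ y, |g y| ≤ C) {A : Set (Fin n → ℝ)} (hA : volume A ≠ ⊤) :
    IntegrableOn g A volume :=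
  Integrable.mono' (integrableOn_const hA) hg.restrict
    (Filter.Eventually.of_forall fun y => by simpa using hb y)


set_option maxHeartbeats 1000000 in
/-- Covering theorem: if `K = V + H ⊆ H + X` with `H = (1/2)U`, then
`∫_V f ≤ |X| ∫_U f` for every non-negative positive definite `f`. -/
theorem covering_integral_bound {n : ℕ} (U V : Set (Fin n → ℝ))
    (hU : IsSymConvexBody U) (hV : IsSymConvexBody V)
    (X : Finset (Fin n → ℝ))
    (hcov : V + (2 : ℝ)⁻¹ • U ⊆ (2 : ℝ)⁻¹ • U + (X : Set (Fin n → ℝ)))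
    (f : (Fin n → ℝ) → ℝ) (hc : Continuous f) (hnn : ∀ x, 0 ≤ f x)
    (hpd : IsPosDefR f) :
    ∫ x in V, f x ≤ (X.card : ℝ) * ∫ x in U, f x := by
  classical
  set H : Set (Fin n → ℝ) := (2 : ℝ)⁻¹ • U with hHdef
  -- basic facts about U, V, H
  have hUcomp : IsCompact U := hU.2.1
  have hVcomp : IsCompact V := hV.2.1
  have hUmeas : MeasurableSet U := hUcomp.isClosed.measurableSet
  have hUfin : volume U ≠ ⊤ := hUcomp.measure_lt_top.ne
  have hVfin : volume V ≠ ⊤ := hVcomp.measure_lt_top.ne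
  have hHcomp : IsCompact H := IsCompact.smul _ hUcomp
  have hHmeas : MeasurableSet H := hHcomp.isClosed.measurableSet
  have hHfin : volume H ≠ ⊤ := hHcomp.measure_lt_top.ne
  have hHne : volume H ≠ 0 := by
    have hint : (interior H).Nonempty := by
      rw [hHdef, interior_smul₀ (by norm_num : (2:ℝ)⁻¹ ≠ 0)]
      exact hU.2.2.1.smul_set
    exact (MeasureTheory.Measure.measure_pos_of_nonempty_interior _ hint).ne'
  have hUneg : ∀ u ∈ U, -u ∈ U := by
    intro u hu
    have : -u ∈ -U := Set.neg_mem_neg.2 hu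
    rwa [← hU.2.2.2] at this
  have hHsub : ∀ a ∈ H, ∀ b ∈ H, a - b ∈ U := by
    rintro a ha b hb
    obtain ⟨u, hu, rfl⟩ := ha
    obtain ⟨w, hw, rfl⟩ := hb
    have h1 : (2:ℝ)⁻¹ • u - (2:ℝ)⁻¹ • w = (2:ℝ)⁻¹ • u + (2:ℝ)⁻¹ • (-w) := by
      rw [smul_neg]; abel
    rw [h1]
    exact hU.1 hu (hUneg w hw) (by norm_num) (by norm_num) (by norm_num)
  have hHneg : ∀ a ∈ H, -a ∈ H := by
    rintro a ⟨u, hu, rfl⟩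
    exact ⟨-u, hUneg u hu, by simp [smul_neg]⟩
  -- bounds on f
  have hfb : ∀ y, f y ≤ f 0 := hpd.le_zero
  have hfabs : ∀ y, |f y| ≤ f 0 := fun y => by
    rw [_root_.abs_of_nonneg (hnn y)]; exact hfb y
  have hfmeas : AEStronglyMeasurable f volume := hc.aestronglyMeasurable
  have hfU : IntegrableOn f U volume := integrableOn_of_bdd hfmeas hfabs hUfin
  have hfV : IntegrableOn f V volume := integrableOn_of_bdd hfmeas hfabs hVfin
  set c : ℝ := (volume H).toReal with hcdef
  have hcpos : 0 < c := ENNReal.toReal_pos hHne hHfin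
  -- the weight functions W x
  set W : (Fin n → ℝ) → (Fin n → ℝ) → ℝ :=
    fun x v => ∫ s in H, Set.indicator H (fun _ => (1:ℝ)) (v + s - x) with hWdef
  have hWmeas : ∀ x, StronglyMeasurable (W x) := by
    intro x
    have : StronglyMeasurable fun p : (Fin n → ℝ) × (Fin n → ℝ) =>
        Set.indicator H (fun _ => (1:ℝ)) (p.1 + p.2 - x) :=
      ((measurable_const.indicator hHmeas).comp
        ((measurable_fst.add measurable_snd).sub measurable_const)).stronglyMeasurable
    exact this.integral_prod_right'
  have hind_bd : ∀ z : Fin n → ℝ, |Set.indicator H (fun _ => (1:ℝ)) z| ≤ 1 := fun z => by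
    rw [_root_.abs_of_nonneg (Set.indicator_nonneg (fun _ _ => zero_le_one) _)]
    exact Set.indicator_le_self' (fun _ _ => zero_le_one) _
  have hWnn : ∀ x v, 0 ≤ W x v := by
    intro x v
    exact setIntegral_nonneg hHmeas fun s _ => Set.indicator_nonneg (fun _ _ => zero_le_one) _
  have hWle : ∀ x v, W x v ≤ c := by
    intro x v
    have h1 : ∀ s ∈ H, Set.indicator H (fun _ => (1:ℝ)) (v + s - x) ≤ 1 := fun s _ =>
      Set.indicator_le_self' (fun _ _ => zero_le_one) _
    calc W x v ≤ ∫ s in H, (1:ℝ) := by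
          refine setIntegral_mono_on ?_ ?_ hHmeas h1
          · exact integrableOn_of_bdd
              ((measurable_const.indicator hHmeas).comp
                ((measurable_const.add measurable_id).sub measurable_const)).aestronglyMeasurable
              (fun y => hind_bd _) hHfin
          · exact integrableOn_const hHfin
      _ = c := by simp [hcdef, measureReal_def]
  -- covering: pointwise lower bound
  have hcover : ∀ v ∈ V, c ≤ ∑ x ∈ X, W x v := by
    intro v hv
    have h1 : ∀ s ∈ H, (1:ℝ) ≤ ∑ x ∈ X, Set.indicator H (fun _ => (1:ℝ)) (v + s - x) := by
      intro s hs
      have hmem : v + s ∈ V + H := Set.add_mem_add hv hs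
      obtain ⟨a, ha, b, hb, hab⟩ := hcov hmem
      have hab' : a + b = v + s := hab
      have hterm : Set.indicator H (fun _ => (1:ℝ)) (v + s - b) = 1 := by
        have he : v + s - b = a := by rw [← hab']; abel
        rw [he]; exact Set.indicator_of_mem ha _
      have hsum := Finset.single_le_sum
        (f := fun x => Set.indicator H (fun _ => (1:ℝ)) (v + s - x))
        (fun x _ => Set.indicator_nonneg (fun _ _ => zero_le_one) _) hb
      beta_reduce at hsum
      rw [hterm] at hsum
      exact hsum
    have hintx : ∀ x : Fin n → ℝ, IntegrableOn
        (fun s => Set.indicator H (fun _ => (1:ℝ)) (v + s - x)) H volume := by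
      intro x
      exact integrableOn_of_bdd
        ((measurable_const.indicator hHmeas).comp
          ((measurable_const.add measurable_id).sub measurable_const)).aestronglyMeasurable
        (fun y => hind_bd _) hHfin
    have hle : ∫ s in H, (1:ℝ)
        ≤ ∫ s in H, ∑ x ∈ X, Set.indicator H (fun _ => (1:ℝ)) (v + s - x) := by
      refine setIntegral_mono_on (integrableOn_const hHfin) ?_ hHmeas h1
      exact integrable_finset_sum X fun x _ => hintx x
    calc c = ∫ s in H, (1:ℝ) := by simp [hcdef, measureReal_def]
      _ ≤ ∫ s in H, ∑ x ∈ X, Set.indicator H (fun _ => (1:ℝ)) (v + s - x) := hle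
      _ = ∑ x ∈ X, W x v := integral_finset_sum X fun x _ => hintx x
  -- support of W
  set Kx : (Fin n → ℝ) → Set (Fin n → ℝ) := fun x => (fun y => x + y) '' U with hKdef
  have hKcomp : ∀ x, IsCompact (Kx x) := fun x =>
    hUcomp.image (continuous_const.add continuous_id)
  have hKmeas : ∀ x, MeasurableSet (Kx x) := fun x => (hKcomp x).isClosed.measurableSet
  have hKfin : ∀ x, volume (Kx x) ≠ ⊤ := fun x => (hKcomp x).measure_lt_top.ne
  have hWsupp : ∀ x v, v ∉ Kx x → W x v = 0 := by
    intro x v hvK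
    have hz : ∀ s ∈ H, Set.indicator H (fun _ => (1:ℝ)) (v + s - x) = 0 := by
      intro s hs
      refine Set.indicator_of_notMem (fun hmem => hvK ?_) _
      refine ⟨(v + s - x) - s, hHsub _ hmem _ hs, ?_⟩
      show x + (v + s - x - s) = v
      abel
    calc W x v = ∫ s in H, (0:ℝ) := setIntegral_congr_fun hHmeas hz
      _ = 0 := by simp
  -- f * W x is integrable on the whole space
  have hfW_int : ∀ x, Integrable (fun v => f v * W x v) volume := by
    intro x
    refine Integrable.mono' (g := fun v => Set.indicator (Kx x) (fun _ => f 0 * c) v)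
      ((integrable_indicator_iff (hKmeas x)).2 (integrableOn_const (hKfin x)))
      (hc.measurable.mul (hWmeas x).measurable).aestronglyMeasurable
      (Filter.Eventually.of_forall fun v => ?_)
    beta_reduce
    rw [Real.norm_eq_abs]
    by_cases hvK : v ∈ Kx x
    · rw [Set.indicator_of_mem hvK,
        _root_.abs_of_nonneg (mul_nonneg (hnn v) (hWnn x v))]
      exact mul_le_mul (hfb v) (hWle x v) (hWnn x v) (hnn 0)
    · rw [hWsupp x v hvK, mul_zero, abs_zero, Set.indicator_of_notMem hvK]
  -- the convolution-type quantity G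
  set G : (Fin n → ℝ) → ℝ := fun z => ∫ s in H, ∫ t in H, f (t + z - s) with hGdef
  -- Fubini: the total integral of f * W x equals G x
  have hinner_tr : ∀ x s : Fin n → ℝ,
      ∫ v, f v * Set.indicator H (fun _ => (1:ℝ)) (v + s - x) = ∫ t in H, f (t + x - s) := by
    intro x s
    have key := integral_add_right_eq_self (μ := volume)
      (fun v => f v * Set.indicator H (fun _ => (1:ℝ)) (v + s - x)) (x - s)
    rw [← key]
    calc ∫ w, f (w + (x - s)) * Set.indicator H (fun _ => (1:ℝ)) (w + (x - s) + s - x)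
        = ∫ w, Set.indicator H (fun t => f (t + x - s)) w := by
          refine integral_congr_ae (Filter.Eventually.of_forall fun w => ?_)
          beta_reduce
          rw [show w + (x - s) + s - x = w from by abel, show w + (x - s) = w + x - s from by abel]
          by_cases hw : w ∈ H
          · rw [Set.indicator_of_mem hw, Set.indicator_of_mem hw, mul_one]
          · rw [Set.indicator_of_notMem hw, Set.indicator_of_notMem hw, mul_zero]
      _ = ∫ t in H, f (t + x - s) := integral_indicator hHmeas
  have hfWG : ∀ x, ∫ v, f v * W x v = G x := by
    intro x
    have hFm2 : StronglyMeasurable fun p : (Fin n → ℝ) × (Fin n → ℝ) =>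
        f p.1 * Set.indicator H (fun _ => (1:ℝ)) (p.1 + p.2 - x) :=
      ((hc.measurable.comp measurable_fst).mul
        ((measurable_const.indicator hHmeas).comp
          ((measurable_fst.add measurable_snd).sub measurable_const))).stronglyMeasurable
    have hF2int : Integrable (fun p : (Fin n → ℝ) × (Fin n → ℝ) =>
        f p.1 * Set.indicator H (fun _ => (1:ℝ)) (p.1 + p.2 - x))
        (volume.prod (volume.restrict H)) := by
      have hae2 : ∀ᵐ p : (Fin n → ℝ) × (Fin n → ℝ) ∂(volume.prod (volume.restrict H)),
          p.2 ∈ H := by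
        rw [ae_iff]
        have hset : {p : (Fin n → ℝ) × (Fin n → ℝ) | ¬ p.2 ∈ H} = Set.univ ×ˢ Hᶜ := by
          ext p; simp [Set.mem_prod]
        rw [hset, Measure.prod_prod, Measure.restrict_apply hHmeas.compl]
        simp
      have hDint : Integrable (Set.indicator ((Kx x) ×ˢ (Set.univ : Set (Fin n → ℝ)))
          (fun _ => f 0)) (volume.prod (volume.restrict H)) := by
        refine (integrable_indicator_iff ((hKmeas x).prod MeasurableSet.univ)).2 ?_
        refine integrableOn_const (LT.lt.ne ?_)
        rw [Measure.prod_prod]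
        exact ENNReal.mul_lt_top (hKfin x).lt_top
          (by rw [Measure.restrict_apply_univ]; exact hHfin.lt_top)
      refine Integrable.mono' hDint hFm2.aestronglyMeasurable ?_
      filter_upwards [hae2] with p hp
      rw [Real.norm_eq_abs, abs_mul]
      by_cases h1 : p.1 + p.2 - x ∈ H
      · have hp1 : p.1 ∈ Kx x := by
          refine ⟨(p.1 + p.2 - x) - p.2, hHsub _ h1 _ hp, ?_⟩
          show x + (p.1 + p.2 - x - p.2) = p.1
          abel
        rw [Set.indicator_of_mem (Set.mem_prod.2 ⟨hp1, Set.mem_univ _⟩)]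
        calc |f p.1| * |Set.indicator H (fun _ => (1:ℝ)) (p.1 + p.2 - x)| ≤ f 0 * 1 :=
              mul_le_mul (hfabs _) (hind_bd _) (abs_nonneg _) (hnn 0)
          _ = f 0 := mul_one _
      · rw [Set.indicator_of_notMem h1, abs_zero, mul_zero]
        exact Set.indicator_nonneg (fun _ _ => hnn 0) _
    calc ∫ v, f v * W x v
        = ∫ v, ∫ s in H, f v * Set.indicator H (fun _ => (1:ℝ)) (v + s - x) := by
          refine integral_congr_ae (Filter.Eventually.of_forall fun v => ?_)
          exact (integral_const_mul (f v) _).symm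
      _ = ∫ s in H, ∫ v, f v * Set.indicator H (fun _ => (1:ℝ)) (v + s - x) :=
          integral_integral_swap hF2int
      _ = ∫ s in H, ∫ t in H, f (t + x - s) := by
          refine integral_congr_ae (Filter.Eventually.of_forall fun s => ?_)
          exact hinner_tr x s
      _ = G x := rfl
  -- step 2
  have hstep2 : ∀ x, ∫ v in V, f v * W x v ≤ G x := by
    intro x
    have h1 : ∫ v in V, f v * W x v ≤ ∫ v, f v * W x v :=
      setIntegral_le_integral (hfW_int x)
        (Filter.Eventually.of_forall fun v => mul_nonneg (hnn v) (hWnn x v))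
    rw [hfWG x] at h1
    exact h1
  -- step 1
  have hVmeas : MeasurableSet V := hVcomp.isClosed.measurableSet
  have hstep1 : (∫ v in V, f v) * c ≤ ∑ x ∈ X, ∫ v in V, f v * W x v := by
    have hsum_int : IntegrableOn (fun v => ∑ x ∈ X, f v * W x v) V volume :=
      integrable_finset_sum X fun x _ => (hfW_int x).integrableOn
    calc (∫ v in V, f v) * c = ∫ v in V, f v * c := (integral_mul_const c f).symm
      _ ≤ ∫ v in V, ∑ x ∈ X, f v * W x v := by
          refine setIntegral_mono_on (hfV.mul_const c) hsum_int hVmeas fun v hv => ?_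
          have h2 := mul_le_mul_of_nonneg_left (hcover v hv) (hnn v)
          rwa [Finset.mul_sum] at h2
      _ = ∑ x ∈ X, ∫ v in V, f v * W x v :=
          integral_finset_sum X fun x _ => (hfW_int x).integrableOn
  -- symmetry of integrals over H under negation
  have hsetneg : ∀ g : (Fin n → ℝ) → ℝ, ∫ y in H, g (-y) = ∫ y in H, g y := by
    intro g
    have h1 : (fun y => Set.indicator H (fun y => g (-y)) y)
        = fun y => Set.indicator H g (-y) := by
      funext y
      by_cases hy : y ∈ H
      · rw [Set.indicator_of_mem hy, Set.indicator_of_mem (hHneg y hy)]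
      · rw [Set.indicator_of_notMem hy, Set.indicator_of_notMem
          (fun hmem => hy (by simpa using hHneg _ hmem))]
    calc ∫ y in H, g (-y) = ∫ y, Set.indicator H (fun y => g (-y)) y :=
          (integral_indicator hHmeas).symm
      _ = ∫ y, Set.indicator H g (-y) := by rw [h1]
      _ = ∫ y, Set.indicator H g y := integral_neg_eq_self _ _
      _ = ∫ y in H, g y := integral_indicator hHmeas
  -- G is even
  have hGsym : ∀ z, G (-z) = G z := by
    intro z
    calc G (-z) = ∫ s in H, ∫ t in H, f (t + -z - s) := rfl
      _ = ∫ s in H, ∫ t in H, f (t + -z + s) := by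
          rw [← hsetneg (fun s => ∫ t in H, f (t + -z - s))]
          refine integral_congr_ae (Filter.Eventually.of_forall fun s => ?_)
          beta_reduce
          refine integral_congr_ae (Filter.Eventually.of_forall fun t => ?_)
          congr 1
          abel
      _ = ∫ s in H, ∫ t in H, f (t + z - s) := by
          refine integral_congr_ae (Filter.Eventually.of_forall fun s => ?_)
          beta_reduce
          rw [← hsetneg (fun t => f (t + -z + s))]
          refine integral_congr_ae (Filter.Eventually.of_forall fun t => ?_)
          beta_reduce
          rw [show -t + -z + s = -(t + z - s) from by abel, hpd.even]
      _ = G z := rfl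
  -- inner integrals: measurability and bounds
  have hGin_meas : ∀ z, StronglyMeasurable fun a : Fin n → ℝ => ∫ b in H, f (b + z - a) := by
    intro z
    have : StronglyMeasurable fun p : (Fin n → ℝ) × (Fin n → ℝ) => f (p.2 + z - p.1) :=
      (hc.comp ((continuous_snd.add continuous_const).sub continuous_fst)).stronglyMeasurable
    exact this.integral_prod_right'
  have hGin_int : ∀ z a, IntegrableOn (fun b => f (b + z - a)) H volume := fun z a =>
    integrableOn_of_bdd (hc.comp ((continuous_id.add continuous_const).sub
      continuous_const)).aestronglyMeasurable (fun y => hfabs _) hHfin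
  have hGin_bd : ∀ z a, |∫ b in H, f (b + z - a)| ≤ f 0 * c := by
    intro z a
    calc |∫ b in H, f (b + z - a)| ≤ ∫ b in H, ‖f (b + z - a)‖ := by
          rw [← Real.norm_eq_abs]
          exact norm_integral_le_integral_norm _
      _ ≤ ∫ b in H, f 0 := by
          refine setIntegral_mono_on (hGin_int z a).norm
            (integrableOn_const hHfin) hHmeas fun b _ => ?_
          rw [Real.norm_eq_abs]
          exact hfabs _
      _ = f 0 * c := by rw [setIntegral_const, measureReal_def, smul_eq_mul, mul_comm]
  have hGout_int : ∀ z, IntegrableOn (fun a => ∫ b in H, f (b + z - a)) H volume := fun z =>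
    integrableOn_of_bdd (hGin_meas z).aestronglyMeasurable (hGin_bd z) hHfin
  -- step 3 : G x ≤ G 0
  have hG0 : ∀ x, G x ≤ G 0 := by
    intro x
    set ψ : (Fin n → ℝ) → ℝ := fun y => 2 * f y - f (y + x) - f (y - x) with hψdef
    have hψm : Measurable ψ := by
      have m1 : Measurable fun y : Fin n → ℝ => f (y + x) :=
        hc.measurable.comp (measurable_id.add_const x)
      have m2 : Measurable fun y : Fin n → ℝ => f (y - x) :=
        hc.measurable.comp (measurable_id.sub_const x)
      exact ((hc.measurable.const_mul 2).sub m1).sub m2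
    have hψb : ∀ y, |ψ y| ≤ 4 * f 0 := by
      intro y
      have h1 := hnn y; have h2 := hfb y; have h3 := hnn (y + x); have h4 := hfb (y + x)
      have h5 := hnn (y - x); have h6 := hfb (y - x); have h7 := hnn 0
      rw [hψdef]
      dsimp only
      rw [abs_le]
      constructor <;> linarith
    have hker := kernel_integral_nonneg hψm (4 * f 0) hψb hHfin
      (fun m s => by simpa only [hψdef] using hpd.sum_form x s)
    have e0 : ∀ a b : Fin n → ℝ, f (a - b) = f (b + 0 - a) := fun a b => by
      rw [show a - b = -(b + 0 - a) from by abel, hpd.even]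
    have e1 : ∀ a b : Fin n → ℝ, f (a - b + x) = f (b + -x - a) := fun a b => by
      rw [show a - b + x = -(b + -x - a) from by abel, hpd.even]
    have e2 : ∀ a b : Fin n → ℝ, f (a - b - x) = f (b + x - a) := fun a b => by
      rw [show a - b - x = -(b + x - a) from by abel, hpd.even]
    have hsplit : ∫ a in H, ∫ b in H, ψ (a - b)
        = 2 * G 0 - G (-x) - G x := by
      calc ∫ a in H, ∫ b in H, ψ (a - b)
          = ∫ a in H, (2 * (∫ b in H, f (b + 0 - a)) - (∫ b in H, f (b + -x - a))
              - (∫ b in H, f (b + x - a))) := by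
            refine integral_congr_ae (Filter.Eventually.of_forall fun a => ?_)
            have hpt : ∀ b : Fin n → ℝ, ψ (a - b)
                = 2 * f (b + 0 - a) - f (b + -x - a) - f (b + x - a) := by
              intro b
              rw [hψdef]
              dsimp only
              rw [e0 a b, e1 a b, e2 a b]
            calc ∫ b in H, ψ (a - b)
                = ∫ b in H, (2 * f (b + 0 - a) - f (b + -x - a) - f (b + x - a)) :=
                  integral_congr_ae (Filter.Eventually.of_forall fun b => hpt b)
              _ = 2 * (∫ b in H, f (b + 0 - a)) - (∫ b in H, f (b + -x - a))
                  - (∫ b in H, f (b + x - a)) := by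
                  have hI1 : IntegrableOn
                      (fun b => 2 * f (b + 0 - a) - f (b + -x - a)) H volume := by
                    refine integrableOn_of_bdd (Continuous.aestronglyMeasurable ?_)
                      (C := 3 * f 0) (fun y => ?_) hHfin
                    · exact (continuous_const.mul (hc.comp ((continuous_id.add
                        continuous_const).sub continuous_const))).sub
                        (hc.comp ((continuous_id.add continuous_const).sub continuous_const))
                    · have b1 := hnn (y + 0 - a); have b2 := hfb (y + 0 - a)
                      have b3 := hnn (y + -x - a); have b4 := hfb (y + -x - a)
                      have b5 := hnn 0
                      rw [abs_le]; constructor <;> linarith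
                  rw [integral_sub hI1 (hGin_int x a),
                    integral_sub ((hGin_int 0 a).const_mul 2) (hGin_int (-x) a),
                    integral_const_mul]
          _ = 2 * G 0 - G (-x) - G x := by
              have hI2 : IntegrableOn (fun a => 2 * (∫ b in H, f (b + 0 - a))
                  - (∫ b in H, f (b + -x - a))) H volume := by
                refine integrableOn_of_bdd (Measurable.aestronglyMeasurable ?_)
                  (C := 3 * (f 0 * c)) (fun y => ?_) hHfin
                · exact ((hGin_meas 0).measurable.const_mul 2).sub (hGin_meas (-x)).measurable
                · have b1 := hGin_bd 0 y; have b2 := hGin_bd (-x) y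
                  rw [abs_le] at b1 b2 ⊢
                  constructor <;> [nlinarith [b1.1, b1.2, b2.1, b2.2]; nlinarith [b1.1, b1.2, b2.1, b2.2]]
              rw [integral_sub hI2 (hGout_int x),
                integral_sub ((hGout_int 0).const_mul 2) (hGout_int (-x)),
                integral_const_mul]
    rw [hsplit, hGsym x] at hker
    linarith
  -- step 4 : G 0 ≤ c * ∫ t in U, f t
  have hstep4 : G 0 ≤ c * ∫ t in U, f t := by
    have hinner4 : ∀ s ∈ H, ∫ t in H, f (t + 0 - s) ≤ ∫ t in U, f t := by
      intro s hs
      have key := integral_add_right_eq_self (μ := volume)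
        (Set.indicator H (fun t => f (t + 0 - s))) s
      calc ∫ t in H, f (t + 0 - s)
          = ∫ w, Set.indicator H (fun t => f (t + 0 - s)) (w + s) := by
            rw [key, integral_indicator hHmeas]
        _ ≤ ∫ w, Set.indicator U f w := by
            refine integral_mono ?_ ((integrable_indicator_iff hUmeas).2 hfU) ?_
            · have hdom : Integrable (Set.indicator U (fun _ => f 0)) volume :=
                (integrable_indicator_iff hUmeas).2 (integrableOn_const hUfin)
              refine Integrable.mono' hdom ?_ (Filter.Eventually.of_forall fun w => ?_)
              · exact (((hc.comp ((continuous_id.add continuous_const).sub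
                  continuous_const)).measurable.indicator hHmeas).comp
                  (measurable_id.add_const s)).aestronglyMeasurable
              · beta_reduce
                rw [Real.norm_eq_abs]
                by_cases hw : w + s ∈ H
                · rw [Set.indicator_of_mem hw]
                  have hwU : w ∈ U := by
                    have h3 := hHsub _ hw _ hs
                    rwa [show w + s - s = w from by abel] at h3
                  rw [Set.indicator_of_mem hwU, _root_.abs_of_nonneg (hnn _)]
                  exact hfb _
                · rw [Set.indicator_of_notMem hw, abs_zero]
                  exact Set.indicator_nonneg (fun _ _ => hnn 0) w
            · intro w
              beta_reduce
              by_cases hw : w + s ∈ H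
              · rw [Set.indicator_of_mem hw]
                have hwU : w ∈ U := by
                  have h3 := hHsub _ hw _ hs
                  rwa [show w + s - s = w from by abel] at h3
                rw [Set.indicator_of_mem hwU, show w + s + 0 - s = w from by abel]
              · rw [Set.indicator_of_notMem hw]
                exact Set.indicator_nonneg (fun t _ => hnn t) w
        _ = ∫ t in U, f t := integral_indicator hUmeas
    calc G 0 = ∫ s in H, ∫ t in H, f (t + 0 - s) := rfl
      _ ≤ ∫ s in H, ∫ t in U, f t := by
          refine setIntegral_mono_on (hGout_int 0) (integrableOn_const hHfin)
            hHmeas hinner4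
      _ = c * ∫ t in U, f t := by rw [setIntegral_const, measureReal_def, smul_eq_mul]
  -- final chain
  have hchain : (∫ v in V, f v) * c ≤ ((X.card : ℝ) * ∫ t in U, f t) * c := by
    calc (∫ v in V, f v) * c ≤ ∑ x ∈ X, ∫ v in V, f v * W x v := hstep1
      _ ≤ ∑ x ∈ X, G x := Finset.sum_le_sum fun x _ => hstep2 x
      _ ≤ ∑ x ∈ X, G 0 := Finset.sum_le_sum fun x _ => hG0 x
      _ = (X.card : ℝ) * G 0 := by rw [Finset.sum_const, nsmul_eq_mul]
      _ ≤ (X.card : ℝ) * (c * ∫ t in U, f t) :=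
          mul_le_mul_of_nonneg_left hstep4 (by positivity)
      _ = ((X.card : ℝ) * ∫ t in U, f t) * c := by ring
  exact le_of_mul_le_mul_right hchain hcpos

end Part3
end
end

section
/- Let U, V ⊂ ℝⁿ be 0-symmetric convex bodies, H = (1/2)U, K = V + H. If X is a finite set with K ⊆ H + X, then the sharp doubling constant satisfies C_n(U, V) ≤ |X| · |U| / |V|. -/
open MeasureTheory Complex Pointwise

noncomputable section

namespace DCB

variable {n : ℕ} {f : (Fin n → ℝ) → ℝ}

lemma even_of_posdef (hpd : IsPosDefR f) (x : Fin n → ℝ) : f (-x) = f x := by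
  classical
  rcases eq_or_ne x 0 with rfl | hx
  · simp
  · have h := (hpd {0, x} (fun z => if z = 0 then 1 else Complex.I)).2
    rw [Finset.sum_pair hx.symm] at h
    rw [Finset.sum_pair hx.symm, Finset.sum_pair hx.symm] at h
    simp only [if_pos rfl, if_neg hx, zero_sub, sub_zero, sub_self, map_one, conj_I] at h
    -- h : im (1*1*f 0 + 1*(-I)*f(-x) + I*1*f x + I*(-I)*f 0) = 0
    simp only [Complex.add_im, Complex.mul_im, Complex.ofReal_re, Complex.ofReal_im] at h
    norm_num at h
    linarith
  
lemma le_zero_of_posdef (hnn : ∀ x, 0 ≤ f x) (hpd : IsPosDefR f) (x : Fin n → ℝ) :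
    f x ≤ f 0 := by
  classical
  rcases eq_or_ne x 0 with rfl | hx
  · exact le_rfl
  · have h := (hpd {0, x} (fun z => if z = 0 then 1 else -1)).1
    rw [Finset.sum_pair hx.symm] at h
    rw [Finset.sum_pair hx.symm, Finset.sum_pair hx.symm] at h
    simp only [if_pos rfl, if_neg hx, zero_sub, sub_zero, sub_self, map_one] at h
    have he := even_of_posdef hpd x
    simp only [map_neg, map_one] at h
    simp only [Complex.add_re, Complex.mul_re, Complex.ofReal_re, Complex.ofReal_im] at h
    norm_num at h
    rw [he] at h
    linarith


lemma map_eval {ι : Type*} [Fintype ι] {α : Type*} [MeasurableSpace α]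
    (μ : Measure α) [IsProbabilityMeasure μ] (i : ι) :
    (Measure.pi fun _ : ι => μ).map (fun ω => ω i) = μ := by
  classical
  ext s hs
  rw [Measure.map_apply (measurable_pi_apply i) hs]
  have hpre : (fun ω : ι → α => ω i) ⁻¹' s
      = Set.pi Set.univ (Function.update (fun _ : ι => Set.univ) i s) := by
    ext ω
    simp only [Set.mem_preimage, Set.mem_univ_pi]
    constructor
    · intro h k
      rcases eq_or_ne k i with rfl | hk
      · simpa using h
      · simp [Function.update_of_ne hk]
    · intro h
      simpa using h i
  rw [hpre, Measure.pi_pi]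
  rw [← Finset.prod_subset (Finset.subset_univ {i}) (fun k _ hk => ?_)]
  · simp
  · have hk : k ≠ i := by simpa using hk
    simp [Function.update_of_ne hk]

lemma map_eval_pair {ι : Type*} [Fintype ι] {α : Type*} [MeasurableSpace α]
    (μ : Measure α) [IsProbabilityMeasure μ] {i j : ι} (hij : i ≠ j) :
    (Measure.pi fun _ : ι => μ).map (fun ω => (ω i, ω j)) = μ.prod μ := by
  classical
  refine (Measure.prod_eq fun s t hs ht => ?_).symm
  rw [Measure.map_apply ((measurable_pi_apply i).prodMk (measurable_pi_apply j)) (hs.prod ht)]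
  have hpre : (fun ω : ι → α => (ω i, ω j)) ⁻¹' (s ×ˢ t)
      = Set.pi Set.univ
        (Function.update (Function.update (fun _ : ι => Set.univ) i s) j t) := by
    ext ω
    simp only [Set.mem_preimage, Set.mem_prod, Set.mem_univ_pi]
    constructor
    · rintro ⟨h1, h2⟩ k
      rcases eq_or_ne k j with rfl | hkj
      · simpa using h2
      · rcases eq_or_ne k i with rfl | hki
        · simpa [Function.update_of_ne hkj] using h1
        · simp [Function.update_of_ne hkj, Function.update_of_ne hki]
    · intro h
      refine ⟨?_, ?_⟩
      · have := h i
        simpa [Function.update_of_ne hij] using this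
      · simpa using h j
  rw [hpre, Measure.pi_pi]
  rw [← Finset.prod_subset (Finset.subset_univ {i, j}) (fun k _ hk => ?_)]
  · rw [Finset.prod_pair hij]
    simp [Function.update_of_ne hij]
  · simp only [Finset.mem_insert, Finset.mem_singleton, not_or] at hk
    simp [Function.update_of_ne hk.2, Function.update_of_ne hk.1]

lemma null_shift_diag {α : Type*} [MeasurableSpace α] {β : Type*} [MeasurableSpace β]
    [AddCommGroup β] [MeasurableSingletonClass β] [MeasurableSub₂ β]
    (P : Measure α) (μ : Measure β) [SFinite μ]
    (hsing : ∀ z : β, μ {z} = 0)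
    (T : α → β × β) (hT : Measurable T)
    (hmap : P.map T = μ.prod μ) (c : β) :
    P {ω | (T ω).1 = c + (T ω).2} = 0 := by
  have hSeq : {p : β × β | p.1 = c + p.2} = (fun p : β × β => p.1 - p.2) ⁻¹' {c} := by
    ext p
    simp only [Set.mem_setOf_eq, Set.mem_preimage, Set.mem_singleton_iff]
    constructor
    · intro h; rw [h]; abel
    · intro h; rw [← h]; abel
  have hS : MeasurableSet {p : β × β | p.1 = c + p.2} := by
    rw [hSeq]
    exact (measurable_fst.sub measurable_snd) (measurableSet_singleton c)
  have hPS : P {ω | (T ω).1 = c + (T ω).2} = (μ.prod μ) {p : β × β | p.1 = c + p.2} := by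
    rw [← hmap, Measure.map_apply hT hS]
    rfl
  rw [hPS, Measure.prod_apply hS]
  have hsec : ∀ a : β, μ (Prod.mk a ⁻¹' {p : β × β | p.1 = c + p.2}) = 0 := by
    intro a
    have : Prod.mk a ⁻¹' {p : β × β | p.1 = c + p.2} = {-c + a} := by
      ext b
      simp only [Set.mem_preimage, Set.mem_setOf_eq, Set.mem_singleton_iff]
      constructor
      · intro h; rw [h]; abel
      · intro h; rw [h]; abel
    rw [this]
    exact hsing _
  simp only [hsec]
  simp


def sgn {N : ℕ} : Fin N ⊕ Fin N → ℝ := Sum.elim (fun _ => (1 : ℝ)) (fun _ => (-1 : ℝ))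

lemma Q_nonneg (hpd : IsPosDefR f) {N : ℕ} (p : Fin N ⊕ Fin N → (Fin n → ℝ))
    (hp : Function.Injective p) :
    0 ≤ ∑ k : Fin N ⊕ Fin N, ∑ l : Fin N ⊕ Fin N, sgn k * sgn l * f (p k - p l) := by
  classical
  set c : (Fin n → ℝ) → ℂ := fun z =>
    if z ∈ Finset.image (fun i : Fin N => p (Sum.inl i)) Finset.univ then 1 else -1 with hc
  have hcp : ∀ k, c (p k) = (sgn k : ℂ) := by
    intro k
    cases k with
    | inl i =>
      have : p (Sum.inl i) ∈ Finset.image (fun i : Fin N => p (Sum.inl i)) Finset.univ :=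
        Finset.mem_image_of_mem _ (Finset.mem_univ i)
      simp only [hc]
      rw [if_pos this]
      simp [sgn]
    | inr j =>
      have : p (Sum.inr j) ∉ Finset.image (fun i : Fin N => p (Sum.inl i)) Finset.univ := by
        intro hmem
        obtain ⟨i, _, hi⟩ := Finset.mem_image.mp hmem
        exact Sum.inl_ne_inr (hp hi)
      simp only [hc]
      rw [if_neg this]
      simp [sgn]
  have h := (hpd (Finset.image p Finset.univ) c).1
  have hinj : ∀ x ∈ Finset.univ, ∀ y ∈ Finset.univ, p x = p y → x = y :=
    fun x _ y _ h => hp h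
  rw [Finset.sum_image hinj] at h
  have hsum : ∀ k : Fin N ⊕ Fin N,
      (∑ b ∈ Finset.image p Finset.univ, c (p k) * (starRingEnd ℂ) (c b) * ((f (p k - b) : ℝ) : ℂ))
      = ((∑ l : Fin N ⊕ Fin N, sgn k * sgn l * f (p k - p l) : ℝ) : ℂ) := by
    intro k
    rw [Finset.sum_image hinj]
    push_cast
    refine Finset.sum_congr rfl fun l _ => ?_
    rw [hcp k, hcp l]
    rw [show (starRingEnd ℂ) ((sgn l : ℝ) : ℂ) = ((sgn l : ℝ) : ℂ) from Complex.conj_ofReal _]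
  rw [Finset.sum_congr rfl (fun k _ => hsum k)] at h
  rw [show (∑ k : Fin N ⊕ Fin N, ((∑ l : Fin N ⊕ Fin N, sgn k * sgn l * f (p k - p l) : ℝ) : ℂ))
      = ((∑ k : Fin N ⊕ Fin N, ∑ l : Fin N ⊕ Fin N, sgn k * sgn l * f (p k - p l) : ℝ) : ℂ) by
    push_cast; rfl] at h
  simpa using h


/-- iterated integral of `f (a - y - b)` -/
def Dint (f : (Fin n → ℝ) → ℝ) (μ : Measure (Fin n → ℝ)) (y : Fin n → ℝ) : ℝ :=
  ∫ a, ∫ b, f (a - y - b) ∂μ ∂μ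

lemma integrable_comp_f {α : Type*} [MeasurableSpace α] (P : Measure α) [IsFiniteMeasure P]
    (hf : Continuous f) (hb : ∀ z, |f z| ≤ f 0) {T : α → (Fin n → ℝ)} (hT : Measurable T) :
    Integrable (fun ω => f (T ω)) P :=
  Integrable.mono' (integrable_const (f 0)) ((hf.measurable.comp hT).aestronglyMeasurable)
    (ae_of_all _ fun ω => by simpa using hb (T ω))

lemma Dint_eq_map {α : Type*} [MeasurableSpace α] (P : Measure α) [IsProbabilityMeasure P]
    (μ : Measure (Fin n → ℝ)) [IsProbabilityMeasure μ]
    (hf : Continuous f) (hb : ∀ z, |f z| ≤ f 0)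
    (T : α → (Fin n → ℝ) × (Fin n → ℝ)) (hT : Measurable T)
    (hmap : P.map T = μ.prod μ) (c : Fin n → ℝ) :
    ∫ ω, f ((T ω).1 - c - (T ω).2) ∂P = Dint f μ c := by
  have hg : Continuous (fun p : (Fin n → ℝ) × (Fin n → ℝ) => f (p.1 - c - p.2)) :=
    hf.comp ((continuous_fst.sub continuous_const).sub continuous_snd)
  have h1 : ∫ ω, f ((T ω).1 - c - (T ω).2) ∂P
      = ∫ p, f (p.1 - c - p.2) ∂(μ.prod μ) := by
    rw [← hmap, integral_map hT.aemeasurable hg.aestronglyMeasurable]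
  rw [h1, Dint]
  exact integral_prod _ (integrable_comp_f (μ.prod μ) hf hb
    ((measurable_fst.sub measurable_const).sub measurable_snd))

lemma sum_ite_diag (N : ℕ) (a b : ℝ) :
    ∑ i : Fin N, ∑ j : Fin N, (if i = j then a else b)
      = N * a + ((N : ℝ)^2 - N) * b := by
  have h1 : ∀ i : Fin N, (∑ j : Fin N, (if i = j then a else b)) = N * b + (a - b) := by
    intro i
    have : ∀ j : Fin N, (if i = j then a else b) = b + (if i = j then a - b else 0) := by
      intro j; by_cases h : i = j <;> simp [h]
    rw [Finset.sum_congr rfl fun j _ => this j, Finset.sum_add_distrib,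
      Finset.sum_const, Finset.sum_ite_eq]
    simp [mul_comm]
  rw [Finset.sum_congr rfl fun i _ => h1 i, Finset.sum_const]
  simp only [Finset.card_univ, Fintype.card_fin, nsmul_eq_mul]
  ring


lemma Dint_le_Dint_zero (hf : Continuous f) (hnn : ∀ x, 0 ≤ f x) (hpd : IsPosDefR f)
    (μ : Measure (Fin n → ℝ)) [IsProbabilityMeasure μ] (hsing : ∀ z, μ {z} = 0)
    (y : Fin n → ℝ) : Dint f μ y ≤ Dint f μ 0 := by
  have hb : ∀ z, |f z| ≤ f 0 := fun z => by
    rw [_root_.abs_of_nonneg (hnn z)]; exact le_zero_of_posdef hnn hpd z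
  have heven : ∀ z, f (-z) = f z := even_of_posdef hpd
  have key : ∀ N : ℕ, (N : ℝ)^2 * Dint f μ y ≤ N * f 0 + ((N : ℝ)^2 - N) * Dint f μ 0 := by
    intro N
    set P : Measure ((Fin N → (Fin n → ℝ)) × (Fin N → (Fin n → ℝ))) :=
      (Measure.pi fun _ => μ).prod (Measure.pi fun _ => μ) with hP
    haveI : IsProbabilityMeasure P := by rw [hP]; infer_instance
    set val : ((Fin N → (Fin n → ℝ)) × (Fin N → (Fin n → ℝ))) → (Fin N ⊕ Fin N) → (Fin n → ℝ) :=
      fun ω => Sum.elim ω.1 (fun j => y + ω.2 j) with hval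
    have hvmeas : ∀ k, Measurable fun ω : ((Fin N → (Fin n → ℝ)) × (Fin N → (Fin n → ℝ))) => val ω k := by
      intro k
      cases k with
      | inl i => exact (measurable_pi_apply i).comp measurable_fst
      | inr j => exact measurable_const.add ((measurable_pi_apply j).comp measurable_snd)
    -- the four map computations
    have hmp_fst : P.map Prod.fst = (Measure.pi fun _ : Fin N => μ) := by
      rw [hP, Measure.map_fst_prod]; simp
    have hmp_snd : P.map Prod.snd = (Measure.pi fun _ : Fin N => μ) := by
      rw [hP, Measure.map_snd_prod]; simp
    have hmap_ll : ∀ {i j : Fin N}, i ≠ j →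
        P.map (fun ω => (ω.1 i, ω.1 j)) = μ.prod μ := by
      intro i j hij
      have hpm : Measurable fun ω' : Fin N → (Fin n → ℝ) => (ω' i, ω' j) :=
        (measurable_pi_apply i).prodMk (measurable_pi_apply j)
      rw [show (fun ω : ((Fin N → (Fin n → ℝ)) × (Fin N → (Fin n → ℝ))) => (ω.1 i, ω.1 j))
          = (fun ω' : Fin N → (Fin n → ℝ) => (ω' i, ω' j)) ∘ Prod.fst from rfl,
        ← Measure.map_map hpm measurable_fst, hmp_fst, map_eval_pair μ hij]
    have hmap_rr : ∀ {i j : Fin N}, i ≠ j →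
        P.map (fun ω => (ω.2 i, ω.2 j)) = μ.prod μ := by
      intro i j hij
      have hpm : Measurable fun ω' : Fin N → (Fin n → ℝ) => (ω' i, ω' j) :=
        (measurable_pi_apply i).prodMk (measurable_pi_apply j)
      rw [show (fun ω : ((Fin N → (Fin n → ℝ)) × (Fin N → (Fin n → ℝ))) => (ω.2 i, ω.2 j))
          = (fun ω' : Fin N → (Fin n → ℝ) => (ω' i, ω' j)) ∘ Prod.snd from rfl,
        ← Measure.map_map hpm measurable_snd, hmp_snd, map_eval_pair μ hij]
    have hmap_lr : ∀ (i j : Fin N),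
        P.map (fun ω => (ω.1 i, ω.2 j)) = μ.prod μ := by
      intro i j
      have h1 : MeasurePreserving (fun ω' : Fin N → (Fin n → ℝ) => ω' i)
          (Measure.pi fun _ => μ) μ := ⟨measurable_pi_apply i, map_eval μ i⟩
      have h2 : MeasurePreserving (fun ω' : Fin N → (Fin n → ℝ) => ω' j)
          (Measure.pi fun _ => μ) μ := ⟨measurable_pi_apply j, map_eval μ j⟩
      exact (h1.prod h2).map_eq
    have hmap_rl : ∀ (i j : Fin N),
        P.map (fun ω => (ω.1 i, ω.2 j)) = μ.prod μ := hmap_lr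
    -- a.e. injectivity of the sample points
    have h4 : ∀ k l : Fin N ⊕ Fin N, k ≠ l → ∀ᵐ ω ∂P, val ω k ≠ val ω l := by
      intro k l hkl
      rw [ae_iff]
      cases k with
      | inl i =>
        cases l with
        | inl j =>
          have hij : i ≠ j := fun h => hkl (by rw [h])
          have h0 := null_shift_diag P μ hsing _
            ((hvmeas (Sum.inl i)).prodMk (hvmeas (Sum.inl j))) (hmap_ll hij) 0
          refine le_antisymm (le_trans (measure_mono ?_) (le_of_eq h0)) zero_le
          intro ω hω
          simp only [Set.mem_setOf_eq, not_not] at hω ⊢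
          simpa [zero_add] using hω
        | inr j =>
          have h0 := null_shift_diag P μ hsing _
            ((hvmeas (Sum.inl i)).prodMk (((measurable_pi_apply j).comp measurable_snd)))
            (hmap_lr i j) y
          refine le_antisymm (le_trans (measure_mono ?_) (le_of_eq h0)) zero_le
          intro ω hω
          simp only [Set.mem_setOf_eq, not_not] at hω ⊢
          simpa [hval] using hω
      | inr i =>
        cases l with
        | inl j =>
          have h0 := null_shift_diag P μ hsing _
            ((hvmeas (Sum.inl j)).prodMk (((measurable_pi_apply i).comp measurable_snd)))
            (hmap_lr j i) y
          refine le_antisymm (le_trans (measure_mono ?_) (le_of_eq h0)) zero_le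
          intro ω hω
          simp only [Set.mem_setOf_eq, not_not] at hω ⊢
          simp only [hval, Sum.elim_inr, Sum.elim_inl] at hω
          exact hω.symm
        | inr j =>
          have hij : i ≠ j := fun h => hkl (by rw [h])
          have h0 := null_shift_diag P μ hsing _
            ((((measurable_pi_apply i).comp measurable_snd)).prodMk
              (((measurable_pi_apply j).comp measurable_snd))) (hmap_rr hij) 0
          refine le_antisymm (le_trans (measure_mono ?_) (le_of_eq h0)) zero_le
          intro ω hω
          simp only [Set.mem_setOf_eq, not_not] at hω ⊢
          simp only [hval, Sum.elim_inr] at hω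
          simpa [zero_add] using add_left_cancel hω
    have hae : ∀ᵐ ω ∂P, Function.Injective (val ω) := by
      have hae' : ∀ᵐ ω ∂P, ∀ k, ∀ l, k ≠ l → val ω k ≠ val ω l := by
        rw [ae_all_iff]
        intro k
        rw [ae_all_iff]
        intro l
        rcases eq_or_ne k l with rfl | hkl
        · exact ae_of_all _ fun ω h => absurd rfl h
        · filter_upwards [h4 k l hkl] with ω h _ using h
      filter_upwards [hae'] with ω h
      intro k l hkl'
      by_contra hne
      exact h k l hne hkl'
    -- nonnegativity of the integral of Q
    have hQpos : 0 ≤ ∫ ω, (∑ k : Fin N ⊕ Fin N, ∑ l : Fin N ⊕ Fin N,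
        sgn k * sgn l * f (val ω k - val ω l)) ∂P :=
      integral_nonneg_of_ae (by filter_upwards [hae] with ω h using Q_nonneg hpd _ h)
    -- integrability of the individual terms
    have hint : ∀ k l : Fin N ⊕ Fin N, Integrable (fun ω => f (val ω k - val ω l)) P :=
      fun k l => integrable_comp_f P hf hb ((hvmeas k).sub (hvmeas l))
    have hint2 : ∀ k l : Fin N ⊕ Fin N,
        Integrable (fun ω => sgn k * sgn l * f (val ω k - val ω l)) P :=
      fun k l => (hint k l).const_mul _
    -- compute the integral as a double sum
    have hQeq : ∫ ω, (∑ k : Fin N ⊕ Fin N, ∑ l : Fin N ⊕ Fin N,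
        sgn k * sgn l * f (val ω k - val ω l)) ∂P
        = ∑ k : Fin N ⊕ Fin N, ∑ l : Fin N ⊕ Fin N,
            sgn k * sgn l * ∫ ω, f (val ω k - val ω l) ∂P := by
      rw [integral_finset_sum _ fun k _ => integrable_finset_sum _ fun l _ => hint2 k l]
      refine Finset.sum_congr rfl fun k _ => ?_
      rw [integral_finset_sum _ fun l _ => hint2 k l]
      exact Finset.sum_congr rfl fun l _ => integral_const_mul _ _
    -- values of the individual integrals
    have hI_diag : ∀ k : Fin N ⊕ Fin N, ∫ ω, f (val ω k - val ω k) ∂P = f 0 := by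
      intro k
      simp [sub_self]
    have hI_ll : ∀ {i j : Fin N}, i ≠ j →
        ∫ ω, f (val ω (Sum.inl i) - val ω (Sum.inl j)) ∂P = Dint f μ 0 := by
      intro i j hij
      have h1 : ∫ ω, f (ω.1 i - 0 - ω.1 j) ∂P = Dint f μ 0 := Dint_eq_map P μ hf hb _
        ((hvmeas (Sum.inl i)).prodMk (hvmeas (Sum.inl j))) (hmap_ll hij) 0
      rw [← h1]
      refine integral_congr_ae (ae_of_all _ fun ω => ?_)
      simp [hval, sub_zero]
    have hI_rr : ∀ {i j : Fin N}, i ≠ j →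
        ∫ ω, f (val ω (Sum.inr i) - val ω (Sum.inr j)) ∂P = Dint f μ 0 := by
      intro i j hij
      have h1 : ∫ ω, f (ω.2 i - 0 - ω.2 j) ∂P = Dint f μ 0 := Dint_eq_map P μ hf hb _
        ((((measurable_pi_apply i).comp measurable_snd)).prodMk
          (((measurable_pi_apply j).comp measurable_snd))) (hmap_rr hij) 0
      rw [← h1]
      refine integral_congr_ae (ae_of_all _ fun ω => ?_)
      simp only [hval, Sum.elim_inr, sub_zero]
      congr 1
      abel
    have hI_lr : ∀ (i j : Fin N),
        ∫ ω, f (val ω (Sum.inl i) - val ω (Sum.inr j)) ∂P = Dint f μ y := by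
      intro i j
      have h1 : ∫ ω, f (ω.1 i - y - ω.2 j) ∂P = Dint f μ y := Dint_eq_map P μ hf hb _
        ((hvmeas (Sum.inl i)).prodMk (((measurable_pi_apply j).comp measurable_snd)))
        (hmap_lr i j) y
      rw [← h1]
      refine integral_congr_ae (ae_of_all _ fun ω => ?_)
      simp only [hval, Sum.elim_inl, Sum.elim_inr]
      congr 1
      abel
    have hI_rl : ∀ (i j : Fin N),
        ∫ ω, f (val ω (Sum.inr i) - val ω (Sum.inl j)) ∂P = Dint f μ y := by
      intro i j
      have h1 : ∫ ω, f (ω.1 j - y - ω.2 i) ∂P = Dint f μ y := Dint_eq_map P μ hf hb _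
        ((hvmeas (Sum.inl j)).prodMk (((measurable_pi_apply i).comp measurable_snd)))
        (hmap_lr j i) y
      rw [← h1]
      refine integral_congr_ae (ae_of_all _ fun ω => ?_)
      show f (val ω (Sum.inr i) - val ω (Sum.inl j)) = f (ω.1 j - y - ω.2 i)
      rw [← heven (ω.1 j - y - ω.2 i)]
      congr 1
      simp only [hval, Sum.elim_inl, Sum.elim_inr]
      abel
    -- evaluate the double sum
    rw [hQeq] at hQpos
    rw [Fintype.sum_sum_type] at hQpos
    have e1 : ∑ i : Fin N, ∑ l : Fin N ⊕ Fin N,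
        sgn (Sum.inl i) * sgn l * ∫ ω, f (val ω (Sum.inl i) - val ω l) ∂P
        = (N * f 0 + ((N : ℝ)^2 - N) * Dint f μ 0) + (-((N:ℝ)^2 * Dint f μ y)) := by
      have : ∀ i : Fin N, ∑ l : Fin N ⊕ Fin N,
          sgn (Sum.inl i) * sgn l * ∫ ω, f (val ω (Sum.inl i) - val ω l) ∂P
          = (∑ j : Fin N, (if i = j then f 0 else Dint f μ 0))
            + (∑ _j : Fin N, -(Dint f μ y)) := by
        intro i
        rw [Fintype.sum_sum_type]
        congr 1
        · refine Finset.sum_congr rfl fun j _ => ?_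
          rcases eq_or_ne i j with rfl | hij
          · simp [sgn, hI_diag]
          · simp [sgn, hI_ll hij, hij]
        · refine Finset.sum_congr rfl fun j _ => ?_
          simp [sgn, hI_lr i j]
      rw [Finset.sum_congr rfl fun i _ => this i, Finset.sum_add_distrib, sum_ite_diag]
      simp only [Finset.sum_const, Finset.card_univ, Fintype.card_fin, nsmul_eq_mul,
        Finset.sum_neg_distrib]
      ring
    have e2 : ∑ i : Fin N, ∑ l : Fin N ⊕ Fin N,
        sgn (Sum.inr i) * sgn l * ∫ ω, f (val ω (Sum.inr i) - val ω l) ∂P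
        = (N * f 0 + ((N : ℝ)^2 - N) * Dint f μ 0) + (-((N:ℝ)^2 * Dint f μ y)) := by
      have : ∀ i : Fin N, ∑ l : Fin N ⊕ Fin N,
          sgn (Sum.inr i) * sgn l * ∫ ω, f (val ω (Sum.inr i) - val ω l) ∂P
          = (∑ j : Fin N, (if i = j then f 0 else Dint f μ 0))
            + (∑ _j : Fin N, -(Dint f μ y)) := by
        intro i
        rw [Fintype.sum_sum_type]
        rw [add_comm]
        congr 1
        · refine Finset.sum_congr rfl fun j _ => ?_
          rcases eq_or_ne i j with rfl | hij
          · simp [sgn, hI_diag]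
          · simp [sgn, hI_rr hij, hij]
        · refine Finset.sum_congr rfl fun j _ => ?_
          simp [sgn, hI_rl i j]
      rw [Finset.sum_congr rfl fun i _ => this i, Finset.sum_add_distrib, sum_ite_diag]
      simp only [Finset.sum_const, Finset.card_univ, Fintype.card_fin, nsmul_eq_mul,
        Finset.sum_neg_distrib]
      ring
    rw [e1, e2] at hQpos
    linarith
  -- pass to the limit N → ∞
  by_contra hcon
  push_neg at hcon
  set δ := Dint f μ y - Dint f μ 0 with hδ
  have hδpos : 0 < δ := by simp [hδ]; linarith
  obtain ⟨N, hN⟩ := exists_nat_gt ((f 0 - Dint f μ 0) / δ)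
  have hN1 : (f 0 - Dint f μ 0) < (N + 1 : ℝ) * δ := by
    have : ((f 0 - Dint f μ 0) / δ) < (N + 1 : ℝ) := lt_trans hN (by linarith)
    calc f 0 - Dint f μ 0 = ((f 0 - Dint f μ 0) / δ) * δ := by field_simp
    _ < (N + 1 : ℝ) * δ := by exact mul_lt_mul_of_pos_right this hδpos
  have hkey := key (N + 1)
  push_cast at hkey
  nlinarith [hkey, hN1, hδpos, sq_nonneg ((N:ℝ)+1)]


lemma setIntegral_biUnion_le {ι : Type*} (g : (Fin n → ℝ) → ℝ) (hg : Continuous g)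
    (hnn : ∀ x, 0 ≤ g x) (X : Finset ι) (S : ι → Set (Fin n → ℝ))
    (hS : ∀ x, IsCompact (S x)) :
    ∫ c in ⋃ x ∈ X, S x, g c ≤ ∑ x ∈ X, ∫ c in S x, g c := by
  classical
  induction X using Finset.induction_on with
  | empty => simp
  | @insert a s ha ih =>
    rw [Finset.set_biUnion_insert, Finset.sum_insert ha]
    have hBc : IsCompact (⋃ x ∈ s, S x) := s.isCompact_biUnion (fun i _ => hS i)
    have hint : ∀ t : Set (Fin n → ℝ), IsCompact t → IntegrableOn g t volume :=
      fun t ht => hg.continuousOn.integrableOn_compact ht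
    have h1 : ∫ c in S a ∪ ⋃ x ∈ s, S x, g c
        ≤ (∫ c in S a, g c) + ∫ c in (⋃ x ∈ s, S x), g c := by
      have hsplit : S a ∪ (⋃ x ∈ s, S x) = S a ∪ ((⋃ x ∈ s, S x) \ S a) :=
        (Set.union_diff_self).symm
      rw [hsplit, setIntegral_union disjoint_sdiff_self_right
        (hBc.measurableSet.diff (hS a).measurableSet) (hint _ (hS a))
        ((hint _ hBc).mono_set Set.diff_subset)]
      exact add_le_add le_rfl (setIntegral_mono_set (hint _ hBc) (ae_of_all _ hnn)
        (HasSubset.Subset.eventuallyLE Set.diff_subset))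
    exact h1.trans (add_le_add le_rfl ih)



lemma key_int (hf : Continuous f) (hnn : ∀ x, 0 ≤ f x) (hpd : IsPosDefR f)
    {U V : Set (Fin n → ℝ)} (hU : IsSymConvexBody U) (hV : IsSymConvexBody V)
    (X : Finset (Fin n → ℝ))
    (hcov : V + (2 : ℝ)⁻¹ • U ⊆ (2 : ℝ)⁻¹ • U + (X : Set (Fin n → ℝ))) :
    ∫ z in V, f z ≤ (X.card : ℝ) * ∫ z in U, f z := by
  have hb : ∀ z, |f z| ≤ f 0 := fun z => by
    rw [_root_.abs_of_nonneg (hnn z)]; exact le_zero_of_posdef hnn hpd z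
  have heven := even_of_posdef hpd
  have hUc := hU.2.1
  have hVc := hV.2.1
  set H : Set (Fin n → ℝ) := (2 : ℝ)⁻¹ • U with hHdef
  have hHc : IsCompact H := IsCompact.smul _ hUc
  have hHint_ne : (interior H).Nonempty := by
    rw [hHdef, interior_smul₀ (by norm_num : (2:ℝ)⁻¹ ≠ 0)]
    exact hU.2.2.1.smul_set
  have hHvol_pos : 0 < volume H := Measure.measure_pos_of_nonempty_interior _ hHint_ne
  have hHvol_top : volume H ≠ ⊤ := hHc.measure_lt_top.ne
  set μ : Measure (Fin n → ℝ) := (volume H)⁻¹ • volume.restrict H with hμ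
  haveI : IsProbabilityMeasure μ := by
    constructor
    rw [hμ, Measure.smul_apply, Measure.restrict_apply_univ, smul_eq_mul]
    exact ENNReal.inv_mul_cancel hHvol_pos.ne' hHvol_top
  have hR : ∀ g : (Fin n → ℝ) → ℝ, ∫ z, g z ∂μ = (volume H).toReal⁻¹ * ∫ z in H, g z := by
    intro g
    rw [hμ, integral_smul_measure, ENNReal.toReal_inv, smul_eq_mul]
  have hHsub : ∀ a ∈ H, ∀ b ∈ H, a - b ∈ U := by
    intro a ha b hb'
    obtain ⟨u, hu, rfl⟩ := ha
    obtain ⟨v, hv, rfl⟩ := hb'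
    have hnv : -v ∈ U := by
      rw [hU.2.2.2]
      simpa [Set.mem_neg] using hv
    have := hU.1 hu hnv (by norm_num : (0:ℝ) ≤ 2⁻¹) (by norm_num : (0:ℝ) ≤ 2⁻¹) (by norm_num)
    simpa [smul_neg, sub_eq_add_neg] using this
  have hIntU : IntegrableOn f U volume := hf.continuousOn.integrableOn_compact hUc
  have hFcont : ∀ x : Fin n → ℝ, Continuous fun a => ∫ b, f (a - x - b) ∂μ := by
    intro x
    refine continuous_of_dominated
      (fun a => (hf.comp (continuous_const.sub continuous_id)).aestronglyMeasurable)
      (fun a => ae_of_all _ fun b' => by simpa using hb (a - x - b'))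
      (integrable_const (f 0))
      (ae_of_all _ fun b' => hf.comp ((continuous_id.sub continuous_const).sub continuous_const))
  have hFint : ∀ x : Fin n → ℝ, Integrable (fun a => ∫ b, f (a - x - b) ∂μ) μ := by
    intro x
    refine Integrable.mono' (integrable_const (f 0)) ((hFcont x).aestronglyMeasurable)
      (ae_of_all _ fun a => ?_)
    have := norm_integral_le_of_norm_le_const (μ := μ)
      (f := fun b => f (a - x - b)) (C := f 0) (ae_of_all _ fun b' => by simpa using hb _)
    simpa [measure_univ] using this
  have haeH : ∀ᵐ a ∂μ, a ∈ H := by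
    rw [hμ]
    exact Measure.ae_smul_measure (ae_restrict_mem hHc.measurableSet) _
  -- Step 2 : Dint f μ 0 ≤ |H|⁻¹ ∫_U f
  have step2 : Dint f μ 0 ≤ (volume H).toReal⁻¹ * ∫ z in U, f z := by
    have hpt : ∀ a ∈ H, (∫ b, f (a - 0 - b) ∂μ) ≤ (volume H).toReal⁻¹ * ∫ z in U, f z := by
      intro a ha
      rw [hR]
      refine mul_le_mul_of_nonneg_left ?_ (by positivity)
      calc ∫ z in H, f (a - 0 - z) = ∫ z in H, f (a - z) := by simp only [sub_zero]
        _ = ∫ c in (fun b => a - b) '' H, f c :=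
          ((Measure.measurePreserving_sub_left volume a).setIntegral_image_emb
            (MeasurableEquiv.subLeft a).measurableEmbedding f H).symm
        _ ≤ ∫ z in U, f z := by
          refine setIntegral_mono_set hIntU (ae_of_all _ hnn)
            (HasSubset.Subset.eventuallyLE ?_)
          rintro _ ⟨b', hb', rfl⟩
          exact hHsub a ha b' hb'
    have h0 : Dint f μ 0 = ∫ a, (∫ b, f (a - 0 - b) ∂μ) ∂μ := rfl
    rw [h0]
    have := integral_mono_ae (hFint 0) (integrable_const ((volume H).toReal⁻¹ * ∫ z in U, f z))
      (by filter_upwards [haeH] with a ha using hpt a ha)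
    simpa [measure_univ] using this
  -- Step 3 : |H|⁻¹ ∫_V f ≤ ∑_x Dint f μ x
  have step3 : (volume H).toReal⁻¹ * ∫ z in V, f z ≤ ∑ x ∈ X, Dint f μ x := by
    have hXH_comp : IsCompact (⋃ x ∈ X, (fun b => x + b) '' H) :=
      X.isCompact_biUnion (fun x _ => hHc.image (continuous_add_left x))
    have hVH_comp : IsCompact (V + H) := by
      rw [← Set.add_image_prod]
      exact (hVc.prod hHc).image continuous_add
    have hcovH : V + H ⊆ ⋃ x ∈ X, (fun b => x + b) '' H := by
      intro c hc
      obtain ⟨h1, hh1, x, hx, rfl⟩ := hcov hc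
      exact Set.mem_biUnion hx ⟨h1, hh1, add_comm x h1⟩
    have hpt : ∀ a ∈ H,
        (volume H).toReal⁻¹ * ∫ z in V, f z ≤ ∑ x ∈ X, ∫ b, f (a - x - b) ∂μ := by
      intro a ha
      have hga : Continuous fun c => f (a - c) := hf.comp (continuous_const.sub continuous_id)
      have hga_nn : ∀ c, 0 ≤ f (a - c) := fun c => hnn _
      have h1 : ∀ x : Fin n → ℝ, ∫ b, f (a - x - b) ∂μ
          = (volume H).toReal⁻¹ * ∫ c in (fun b => x + b) '' H, f (a - c) := by
        intro x
        rw [hR]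
        congr 1
        calc ∫ z in H, f (a - x - z) = ∫ z in H, f (a - (x + z)) := by
              refine setIntegral_congr_fun hHc.measurableSet fun z _ => ?_
              rw [sub_sub]
          _ = ∫ c in (fun b => x + b) '' H, f (a - c) :=
            ((measurePreserving_add_left volume x).setIntegral_image_emb
              (MeasurableEquiv.addLeft x).measurableEmbedding (fun c => f (a - c)) H).symm
      rw [Finset.sum_congr rfl fun x _ => h1 x, ← Finset.mul_sum]
      refine mul_le_mul_of_nonneg_left ?_ (by positivity)
      calc ∫ z in V, f z
          = ∫ c in (fun v => v + a) '' V, f (a - c) := by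
            rw [(measurePreserving_add_right volume a).setIntegral_image_emb
              (MeasurableEquiv.addRight a).measurableEmbedding (fun c => f (a - c)) V]
            refine (setIntegral_congr_fun hVc.measurableSet fun v _ => ?_).symm
            rw [show a - (v + a) = -v by abel, heven v]
        _ ≤ ∫ c in V + H, f (a - c) := by
            refine setIntegral_mono_set (hga.continuousOn.integrableOn_compact hVH_comp)
              (ae_of_all _ hga_nn) (HasSubset.Subset.eventuallyLE ?_)
            rintro _ ⟨v, hv, rfl⟩
            exact Set.add_mem_add hv ha
        _ ≤ ∫ c in ⋃ x ∈ X, (fun b => x + b) '' H, f (a - c) :=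
            setIntegral_mono_set (hga.continuousOn.integrableOn_compact hXH_comp)
              (ae_of_all _ hga_nn) (HasSubset.Subset.eventuallyLE hcovH)
        _ ≤ ∑ x ∈ X, ∫ c in (fun b => x + b) '' H, f (a - c) :=
            setIntegral_biUnion_le _ hga hga_nn X _
              (fun x => hHc.image (continuous_add_left x))
    have hsum_eq : ∑ x ∈ X, Dint f μ x = ∫ a, (∑ x ∈ X, ∫ b, f (a - x - b) ∂μ) ∂μ :=
      (integral_finset_sum _ fun x _ => hFint x).symm
    rw [hsum_eq]
    have := integral_mono_ae (integrable_const ((volume H).toReal⁻¹ * ∫ z in V, f z))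
      (integrable_finset_sum _ fun x _ => hFint x)
      (by filter_upwards [haeH] with a ha using hpt a ha)
    simpa [measure_univ] using this
  -- Step 1 : Dint f μ y ≤ Dint f μ 0
  have hDle : ∀ y, Dint f μ y ≤ Dint f μ 0 := by
    rcases Nat.eq_zero_or_pos n with h0 | hpos
    · intro y
      have hy : y = 0 := by subst h0; exact funext fun i => i.elim0
      rw [hy]
    · intro y
      have hsing : ∀ z : Fin n → ℝ, μ {z} = 0 := by
        intro z
        have hz : volume ({z} : Set (Fin n → ℝ)) = 0 := by
          have hzeq : ({z} : Set (Fin n → ℝ)) = Set.pi Set.univ (fun i => {z i}) := by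
            ext w
            simp [Set.mem_pi, funext_iff]
          rw [hzeq, volume_pi_pi]
          exact Finset.prod_eq_zero (Finset.mem_univ (⟨0, hpos⟩ : Fin n)) (by simp)
        rw [hμ, Measure.smul_apply, Measure.restrict_apply (measurableSet_singleton z),
          smul_eq_mul]
        rw [measure_mono_null Set.inter_subset_left hz, mul_zero]
      exact Dint_le_Dint_zero hf hnn hpd μ hsing y
  -- combine
  have hfinal : (volume H).toReal⁻¹ * ∫ z in V, f z
      ≤ (X.card : ℝ) * ((volume H).toReal⁻¹ * ∫ z in U, f z) := by
    calc (volume H).toReal⁻¹ * ∫ z in V, f z ≤ ∑ x ∈ X, Dint f μ x := step3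
      _ ≤ (X.card : ℝ) * Dint f μ 0 := by
          have := Finset.sum_le_card_nsmul X (fun x => Dint f μ x) (Dint f μ 0)
            (fun x _ => hDle x)
          simpa [nsmul_eq_mul] using this
      _ ≤ (X.card : ℝ) * ((volume H).toReal⁻¹ * ∫ z in U, f z) :=
          mul_le_mul_of_nonneg_left step2 (by positivity)
  have hHt : 0 < (volume H).toReal := ENNReal.toReal_pos hHvol_pos.ne' hHvol_top
  have h2 := mul_le_mul_of_nonneg_left hfinal hHt.le
  have hHinv : (volume H).toReal * (volume H).toReal⁻¹ = 1 := mul_inv_cancel₀ hHt.ne'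
  nlinarith [h2, hHinv]


end DCB

/-- If `K = V + H ⊆ H + X` with `H = (1/2)U`, then
`C_n(U,V) ≤ |X| |U| / |V|`. -/
theorem doublingConst_covering_bound {n : ℕ} (U V : Set (Fin n → ℝ))
    (hU : IsSymConvexBody U) (hV : IsSymConvexBody V)
    (X : Finset (Fin n → ℝ))
    (hcov : V + (2 : ℝ)⁻¹ • U ⊆ (2 : ℝ)⁻¹ • U + (X : Set (Fin n → ℝ))) :
    doublingConst n U V ≤ (X.card : ℝ) * (volume U).toReal / (volume V).toReal := by
  have hu : 0 < (volume U).toReal :=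
    ENNReal.toReal_pos (Measure.measure_pos_of_nonempty_interior _ hU.2.2.1).ne'
      hU.2.1.measure_lt_top.ne
  have hv : 0 < (volume V).toReal :=
    ENNReal.toReal_pos (Measure.measure_pos_of_nonempty_interior _ hV.2.2.1).ne'
      hV.2.1.measure_lt_top.ne
  refine Real.sSup_le ?_ (by positivity)
  rintro c ⟨f, hf, hnn, hpd, _, hA, rfl⟩
  have hB : 0 ≤ ∫ z in V, f z := setIntegral_nonneg hV.2.1.measurableSet fun z _ => hnn z
  have hkey := DCB.key_int hf hnn hpd hU hV X hcov
  set A := ∫ x in U, f x with hAdef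
  set B := ∫ x in V, f x with hBdef
  set u := (volume U).toReal
  set v := (volume V).toReal
  have e1 : v⁻¹ * v = 1 := inv_mul_cancel₀ hv.ne'
  have e2 : u * u⁻¹ = 1 := mul_inv_cancel₀ hu.ne'
  rw [div_le_div_iff₀ (by positivity) hv]
  calc v⁻¹ * B * v = B * (v⁻¹ * v) := by ring
    _ = B := by rw [e1, mul_one]
    _ ≤ (X.card : ℝ) * A := hkey
    _ = (X.card : ℝ) * u * (u⁻¹ * A) := by
        rw [show (X.card : ℝ) * u * (u⁻¹ * A) = (X.card : ℝ) * A * (u * u⁻¹) by ring, e2,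
          mul_one]
end
end

section
/- For every natural number r ≥ 1 and every continuous non-negative positive definite function f : ℝ → ℝ, one has (1/(2r)) ∫_{-r}^{r} f(x) dx ≤ (2 + 1/r) · (1/2) ∫_{-1}^{1} f(x) dx; equivalently C_1([-1,1],[-r,r]) ≤ 2 + 1/r. -/
open MeasureTheory Complex Pointwise

noncomputable section

/-- Positive definiteness for complex-valued functions on `ℝ`. -/
def IsPosDefC1 (f : ℝ → ℂ) : Prop :=
  ∀ (X : Finset ℝ) (c : ℝ → ℂ),
    0 ≤ (∑ a ∈ X, ∑ b ∈ X, c a * (starRingEnd ℂ) (c b) * f (a - b)).re ∧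
    (∑ a ∈ X, ∑ b ∈ X, c a * (starRingEnd ℂ) (c b) * f (a - b)).im = 0

/-- Positive definiteness for real-valued functions on `ℝ`. -/
def IsPosDefR1 (f : ℝ → ℝ) : Prop :=
  IsPosDefC1 (fun x => (f x : ℂ))

/-- The set of ratios `(|V|⁻¹ ∫_V f) / (|U|⁻¹ ∫_U f)` over nonzero continuous
non-negative positive definite `f : ℝ → ℝ`. -/
def ratioSet1 (U V : Set ℝ) : Set ℝ :=
  { c | ∃ f : ℝ → ℝ, Continuous f ∧ (∀ x, 0 ≤ f x) ∧ IsPosDefR1 f ∧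
      f ≠ 0 ∧ 0 < ∫ x in U, f x ∧
      c = ((volume V).toReal⁻¹ * ∫ x in V, f x) /
          ((volume U).toReal⁻¹ * ∫ x in U, f x) }

/-- The sharp constant `C_1(U,V)`. -/
def doublingConst1 (U V : Set ℝ) : ℝ := sSup (ratioSet1 U V)

namespace OneDimAux

/-- sample points -/
def σpt (M i : ℕ) : ℝ := (2*(i:ℝ)+1)/(2*(M:ℝ)) - 1/2

/-- sliding window integral -/
def gI (f : ℝ → ℝ) (t : ℝ) : ℝ := ∫ x in (t - 1/2)..(t + 1/2), f x

/-- double sliding window -/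
def φI (f : ℝ → ℝ) (t : ℝ) : ℝ := ∫ x in (t - 1/2)..(t + 1/2), gI f x

lemma σpt_lt {M i : ℕ} (hi : i < M) : σpt M i < 1/2 := by
  have hM : (0:ℝ) < M := by exact_mod_cast Nat.zero_lt_of_lt hi
  have h1 : (2*(i:ℝ)+1) < 2*(M:ℝ) := by
    have : (i:ℝ) + 1 ≤ M := by exact_mod_cast hi
    linarith
  have : (2*(i:ℝ)+1)/(2*(M:ℝ)) < 1 := by
    rw [div_lt_one (by linarith)]
    exact h1
  simp only [σpt]
  linarith

lemma σpt_gt {M i : ℕ} (hi : i < M) : -(1/2) < σpt M i := by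
  have hM : (0:ℝ) < M := by exact_mod_cast Nat.zero_lt_of_lt hi
  have : (0:ℝ) < (2*(i:ℝ)+1)/(2*(M:ℝ)) := by positivity
  simp only [σpt]
  linarith

lemma σpt_reflect {M j : ℕ} (hj : j < M) : σpt M (M - 1 - j) = - σpt M j := by
  have hM : (0:ℝ) < M := by exact_mod_cast Nat.zero_lt_of_lt hj
  have h1 : (M - 1 - j : ℕ) = M - (j+1) := by omega
  have h2 : ((M - (j+1) : ℕ) : ℝ) = (M:ℝ) - (j+1) := by
    have : j + 1 ≤ M := hj
    push_cast [Nat.cast_sub this]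
    ring
  simp only [σpt, h1, h2]
  field_simp
  ring

lemma σpt_inj {M : ℕ} (hM : 0 < M) :
    ∀ a ∈ Finset.range M, ∀ b ∈ Finset.range M, σpt M a = σpt M b → a = b := by
  intro a _ b _ hab
  have hM' : (0:ℝ) < M := by exact_mod_cast hM
  simp only [σpt] at hab
  have h2M : (2*(M:ℝ)) ≠ 0 := by positivity
  field_simp at hab
  exact_mod_cast (show (a:ℝ) = b by linarith)

lemma gI_cont {f : ℝ → ℝ} (hc : Continuous f) : Continuous (gI f) := by
  have hP : Continuous fun b : ℝ => ∫ x in (0:ℝ)..b, f x :=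
    intervalIntegral.continuous_primitive (fun a b => hc.intervalIntegrable a b) 0
  have he : gI f = fun t => (∫ x in (0:ℝ)..(t + 1/2), f x) - ∫ x in (0:ℝ)..(t - 1/2), f x := by
    funext t
    rw [intervalIntegral.integral_interval_sub_left (hc.intervalIntegrable _ _)
      (hc.intervalIntegrable _ _)]
    rfl
  rw [he]
  exact (hP.comp (by continuity)).sub (hP.comp (by continuity))

lemma disc_pos {f : ℝ → ℝ} (hpd : IsPosDefR1 f) {k : ℝ} (hk : 1 ≤ k) {M : ℕ} (hM : 0 < M) :
    0 ≤ ∑ i ∈ Finset.range M, ∑ j ∈ Finset.range M,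
      (2 * f (σpt M i - σpt M j) - f (σpt M i - σpt M j + k) - f (σpt M i - σpt M j - k)) := by
  classical
  set τ : ℕ → ℝ := fun i => k + σpt M i with hτdef
  set c : ℝ → ℂ := fun x => if x < 1/2 then 1 else -1 with hcdef
  have hτgt : ∀ i ∈ Finset.range M, (1/2:ℝ) < τ i := by
    intro i hi
    have := σpt_gt (Finset.mem_range.mp hi)
    simp only [hτdef]
    linarith
  have hcσ : ∀ i ∈ Finset.range M, c (σpt M i) = 1 := by
    intro i hi
    simp only [hcdef]
    rw [if_pos (σpt_lt (Finset.mem_range.mp hi))]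
  have hcτ : ∀ i ∈ Finset.range M, c (τ i) = -1 := by
    intro i hi
    simp only [hcdef]
    rw [if_neg (not_lt.mpr (le_of_lt (hτgt i hi)))]
  have hτinj : ∀ a ∈ Finset.range M, ∀ b ∈ Finset.range M, τ a = τ b → a = b := by
    intro a ha b hb hab
    exact σpt_inj hM a ha b hb (by simpa [hτdef] using hab)
  have hdisj : Disjoint ((Finset.range M).image (σpt M)) ((Finset.range M).image τ) := by
    rw [Finset.disjoint_left]
    rintro x hx hx'
    obtain ⟨i, hi, rfl⟩ := Finset.mem_image.mp hx
    obtain ⟨j, hj, hji⟩ := Finset.mem_image.mp hx'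
    have h1 := σpt_lt (Finset.mem_range.mp hi)
    have h2 := hτgt j hj
    rw [hji] at h2
    linarith
  set X : Finset ℝ := (Finset.range M).image (σpt M) ∪ (Finset.range M).image τ with hXdef
  have hXsum : ∀ G : ℝ → ℂ, ∑ a ∈ X, G a =
      ∑ i ∈ Finset.range M, G (σpt M i) + ∑ i ∈ Finset.range M, G (τ i) := by
    intro G
    rw [hXdef, Finset.sum_union hdisj, Finset.sum_image (σpt_inj hM), Finset.sum_image hτinj]
  have hpd' : IsPosDefC1 (fun x => ((f x : ℝ) : ℂ)) := hpd
  obtain ⟨hre, -⟩ := hpd' X c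
  have key : (∑ a ∈ X, ∑ b ∈ X, c a * (starRingEnd ℂ) (c b) * ((f (a - b) : ℝ) : ℂ)) =
      ((∑ i ∈ Finset.range M, ∑ j ∈ Finset.range M,
        (2 * f (σpt M i - σpt M j) - f (σpt M i - σpt M j + k)
          - f (σpt M i - σpt M j - k)) : ℝ) : ℂ) := by
    rw [hXsum]
    push_cast
    rw [← Finset.sum_add_distrib]
    refine Finset.sum_congr rfl fun i hi => ?_
    rw [hXsum (fun b => c (σpt M i) * (starRingEnd ℂ) (c b) * ((f (σpt M i - b) : ℝ) : ℂ)),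
        hXsum (fun b => c (τ i) * (starRingEnd ℂ) (c b) * ((f (τ i - b) : ℝ) : ℂ))]
    rw [← Finset.sum_add_distrib, ← Finset.sum_add_distrib, ← Finset.sum_add_distrib]
    refine Finset.sum_congr rfl fun j hj => ?_
    have e1 : σpt M i - τ j = σpt M i - σpt M j - k := by simp only [hτdef]; ring
    have e2 : τ i - σpt M j = σpt M i - σpt M j + k := by simp only [hτdef]; ring
    have e3 : τ i - τ j = σpt M i - σpt M j := by simp only [hτdef]; ring
    rw [e1, e2, e3, hcσ i hi, hcτ i hi, hcσ j hj, hcτ j hj]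
    simp only [map_one, map_neg, one_mul, neg_mul, mul_one, neg_neg]
    push_cast
    ring
  rw [key, Complex.ofReal_re] at hre
  exact hre

lemma sum_aux {M : ℕ} (hM : 0 < M) (A : ℕ → ℝ) (e : ℝ) :
    ∑ i ∈ Finset.range M, (A i - e) * (1/(M:ℝ)) = (∑ i ∈ Finset.range M, A i)/(M:ℝ) - e := by
  have hM' : (0:ℝ) < M := by exact_mod_cast hM
  rw [← Finset.sum_mul, Finset.sum_sub_distrib, Finset.sum_const, Finset.card_range,
    nsmul_eq_mul]
  field_simp

lemma riemann {h : ℝ → ℝ} (hc : Continuous h)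
    (hS : ∀ M : ℕ, 0 < M → 0 ≤ ∑ i ∈ Finset.range M, ∑ j ∈ Finset.range M,
      h (σpt M i + σpt M j)) :
    0 ≤ ∫ s in (-(1/2) : ℝ)..(1/2 : ℝ), gI h s := by
  refine le_of_forall_pos_le_add fun ε hε => ?_
  obtain ⟨δ, hδ, hδ'⟩ := Metric.uniformContinuousOn_iff.mp
    ((isCompact_Icc (a := (-2:ℝ)) (b := 2)).uniformContinuousOn_of_continuous
      hc.continuousOn) (ε/2) (by positivity)
  set M : ℕ := ⌈δ⁻¹⌉₊ + 1 with hMdef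
  have hM : 0 < M := Nat.succ_pos _
  have hM' : (0:ℝ) < M := by exact_mod_cast hM
  have hMδ : (1:ℝ)/M < δ := by
    rw [div_lt_iff₀ hM']
    have h1 : δ⁻¹ < M := by
      have h0 := Nat.le_ceil δ⁻¹
      have h2 : ((⌈δ⁻¹⌉₊ : ℝ)) < M := by rw [hMdef]; push_cast; linarith
      linarith
    calc (1:ℝ) = δ * δ⁻¹ := by field_simp
    _ < δ * M := mul_lt_mul_of_pos_left h1 hδ
  set a : ℕ → ℝ := fun i => (i:ℝ)/M - 1/2 with hadef
  have ha0 : a 0 = -(1/2) := by simp [hadef]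
  have haM : a M = 1/2 := by
    simp only [hadef]; rw [div_self (ne_of_gt hM')]; norm_num
  have hghi : ∀ α β : ℝ, IntervalIntegrable (gI h) volume α β :=
    fun α β => (gI_cont hc).intervalIntegrable α β
  have hsplit : (∫ s in (-(1/2) : ℝ)..(1/2 : ℝ), gI h s) =
      ∑ i ∈ Finset.range M, ∫ s in (a i)..(a (i+1)), gI h s := by
    rw [intervalIntegral.sum_integral_adjacent_intervals (fun i _ => hghi _ _), ha0, haM]
  have hcell : ∀ i ∈ Finset.range M, ∀ s ∈ Set.Icc (a i) (a (i+1)),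
      (∑ j ∈ Finset.range M, h (σpt M i + σpt M j))/(M:ℝ) - ε/2 ≤ gI h s := by
    intro i hi s hs
    have hiM := Finset.mem_range.mp hi
    have hiM' : ((i:ℝ)+1) ≤ M := by exact_mod_cast hiM
    have hi0 : (0:ℝ) ≤ i := Nat.cast_nonneg i
    have hs1 : (i:ℝ)/M - 1/2 ≤ s := hs.1
    have hs2 : s ≤ ((i:ℝ)+1)/M - 1/2 := by
      have := hs.2
      simpa only [hadef, Nat.cast_add, Nat.cast_one] using this
    have hsl : -(1/2:ℝ) ≤ s := by
      have : (0:ℝ) ≤ (i:ℝ)/M := by positivity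
      linarith
    have hsu : s ≤ (1/2:ℝ) := by
      have : ((i:ℝ)+1)/M ≤ 1 := by
        rw [div_le_one hM']; exact hiM'
      linarith
    set b : ℕ → ℝ := fun j => s - 1/2 + (j:ℝ)/M with hbdef
    have hb0 : b 0 = s - 1/2 := by simp [hbdef]
    have hbM : b M = s + 1/2 := by
      simp only [hbdef]; rw [div_self (ne_of_gt hM')]; ring
    have hgsplit : gI h s = ∑ j ∈ Finset.range M, ∫ v in (b j)..(b (j+1)), h v := by
      rw [intervalIntegral.sum_integral_adjacent_intervals
        (fun j _ => hc.intervalIntegrable _ _), hb0, hbM]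
      rfl
    rw [hgsplit, ← sum_aux hM (fun j => h (σpt M i + σpt M j)) (ε/2)]
    refine Finset.sum_le_sum fun j hj => ?_
    have hjM := Finset.mem_range.mp hj
    have hjM' : ((j:ℝ)+1) ≤ M := by exact_mod_cast hjM
    have hj0 : (0:ℝ) ≤ j := Nat.cast_nonneg j
    set p : ℝ := σpt M i + σpt M j with hpdef
    have hpform : p = (i:ℝ)/M + (j:ℝ)/M + 1/M - 1 := by
      simp only [hpdef, σpt]
      field_simp
      ring
    have hbj1 : b (j+1) = s - 1/2 + ((j:ℝ)+1)/M := by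
      simp only [hbdef, Nat.cast_add, Nat.cast_one]
    have hblt : b j ≤ b (j+1) := by
      rw [hbj1]
      simp only [hbdef]
      have : (j:ℝ)/M ≤ ((j:ℝ)+1)/M := by gcongr <;> linarith
      linarith
    have hpt : ∀ v ∈ Set.Icc (b j) (b (j+1)), h p - ε/2 ≤ h v := by
      intro v hv
      have hv1 : s - 1/2 + (j:ℝ)/M ≤ v := hv.1
      have hv2 : v ≤ s - 1/2 + ((j:ℝ)+1)/M := by rw [← hbj1]; exact hv.2
      have hjd : ((j:ℝ)+1)/M = (j:ℝ)/M + 1/M := by ring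
      have hid : ((i:ℝ)+1)/M = (i:ℝ)/M + 1/M := by ring
      have hdist : dist v p < δ := by
        rw [Real.dist_eq, abs_sub_lt_iff]
        constructor
        · -- v - p < δ
          have : v - p ≤ 1/M := by rw [hpform]; linarith [hs2, hv2, hjd, hid]
          linarith
        · have : p - v ≤ 1/M := by rw [hpform]; linarith [hs1, hv1, hjd]
          linarith
      have hvmem : v ∈ Set.Icc (-2:ℝ) 2 := by
        constructor
        · have : (0:ℝ) ≤ (j:ℝ)/M := by positivity
          linarith
        · have : ((j:ℝ)+1)/M ≤ 1 := by rw [div_le_one hM']; exact hjM'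
          linarith
      have hpmem : p ∈ Set.Icc (-2:ℝ) 2 := by
        have g1 := σpt_lt hiM
        have g2 := σpt_gt hiM
        have g3 := σpt_lt hjM
        have g4 := σpt_gt hjM
        constructor <;> simp only [hpdef] <;> linarith
      have := hδ' v hvmem p hpmem hdist
      rw [Real.dist_eq, abs_sub_lt_iff] at this
      linarith [this.2]
    calc (h p - ε/2) * (1/(M:ℝ))
        = ∫ _ in (b j)..(b (j+1)), (h p - ε/2) := by
          rw [intervalIntegral.integral_const, smul_eq_mul, hbj1]
          simp only [hbdef]
          ring_nf
      _ ≤ ∫ v in (b j)..(b (j+1)), h v := by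
          apply intervalIntegral.integral_mono_on hblt
            (intervalIntegrable_const) (hc.intervalIntegrable _ _) hpt
  -- integrate the cell bound
  have hcell2 : ∀ i ∈ Finset.range M,
      ((∑ j ∈ Finset.range M, h (σpt M i + σpt M j))/(M:ℝ) - ε/2) * (1/(M:ℝ)) ≤
        ∫ s in (a i)..(a (i+1)), gI h s := by
    intro i hi
    have halt : a i ≤ a (i+1) := by
      simp only [hadef, Nat.cast_add, Nat.cast_one]
      have : (i:ℝ)/M ≤ ((i:ℝ)+1)/M := by gcongr <;> linarith
      linarith
    have hai1 : a (i+1) - a i = 1/(M:ℝ) := by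
      simp only [hadef, Nat.cast_add, Nat.cast_one]; ring
    calc ((∑ j ∈ Finset.range M, h (σpt M i + σpt M j))/(M:ℝ) - ε/2) * (1/(M:ℝ))
        = ∫ _ in (a i)..(a (i+1)),
            ((∑ j ∈ Finset.range M, h (σpt M i + σpt M j))/(M:ℝ) - ε/2) := by
          rw [intervalIntegral.integral_const, smul_eq_mul, hai1]
          ring
      _ ≤ ∫ s in (a i)..(a (i+1)), gI h s :=
          intervalIntegral.integral_mono_on halt intervalIntegrable_const (hghi _ _)
            (hcell i hi)
  have hsum := Finset.sum_le_sum hcell2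
  rw [← hsplit] at hsum
  rw [sum_aux hM (fun i => (∑ j ∈ Finset.range M, h (σpt M i + σpt M j))/(M:ℝ)) (ε/2)]
    at hsum
  rw [← Finset.sum_div] at hsum
  have hSn := hS M hM
  have : (0:ℝ) ≤ (∑ i ∈ Finset.range M, ∑ j ∈ Finset.range M,
      h (σpt M i + σpt M j)) / M / M := by positivity
  linarith

variable {f : ℝ → ℝ}

lemma phi_zero (hc : Continuous f) : φI f 0 = ∫ s in (-(1/2):ℝ)..(1/2:ℝ), gI f s := by
  simp only [φI]; norm_num

lemma phi_k (hc : Continuous f) (k : ℝ) :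
    φI f k = ∫ s in (-(1/2):ℝ)..(1/2:ℝ), gI f (s + k) := by
  simp only [φI]
  rw [intervalIntegral.integral_comp_add_right (gI f) k]
  congr 1 <;> ring

lemma phi_neg_k (hc : Continuous f) (k : ℝ) :
    φI f (-k) = ∫ s in (-(1/2):ℝ)..(1/2:ℝ), gI f (s - k) := by
  simp only [φI]
  rw [intervalIntegral.integral_comp_sub_right (gI f) k]
  congr 1 <;> ring

lemma pair (hc : Continuous f) (hpd : IsPosDefR1 f) {k : ℝ} (hk : 1 ≤ k) :
    φI f k + φI f (-k) ≤ 2 * φI f 0 := by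
  set h : ℝ → ℝ := fun w => 2 * f w - f (w + k) - f (w - k) with hh
  have hck : Continuous fun w : ℝ => f (w + k) := hc.comp (by continuity)
  have hck' : Continuous fun w : ℝ => f (w - k) := hc.comp (by continuity)
  have hhc : Continuous h := ((continuous_const.mul hc).sub hck).sub hck'
  have hS : ∀ M : ℕ, 0 < M → 0 ≤ ∑ i ∈ Finset.range M, ∑ j ∈ Finset.range M,
      h (σpt M i + σpt M j) := by
    intro M hM
    have hrefl : ∑ i ∈ Finset.range M, ∑ j ∈ Finset.range M, h (σpt M i + σpt M j)
        = ∑ i ∈ Finset.range M, ∑ j ∈ Finset.range M, h (σpt M i - σpt M j) := by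
      refine Finset.sum_congr rfl fun i _ => ?_
      rw [← Finset.sum_range_reflect (fun j => h (σpt M i + σpt M j)) M]
      refine Finset.sum_congr rfl fun j hj => ?_
      rw [σpt_reflect (Finset.mem_range.mp hj), ← sub_eq_add_neg]
    rw [hrefl]
    simpa only [hh] using disc_pos hpd hk hM
  have hRie := riemann hhc hS
  have hgh : ∀ s : ℝ, gI h s = 2 * gI f s - gI f (s + k) - gI f (s - k) := by
    intro s
    have e1 : (∫ w in (s-1/2)..(s+1/2), f (w + k)) = gI f (s + k) := by
      rw [intervalIntegral.integral_comp_add_right f k]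
      simp only [gI]; congr 1 <;> ring
    have e2 : (∫ w in (s-1/2)..(s+1/2), f (w - k)) = gI f (s - k) := by
      rw [intervalIntegral.integral_comp_sub_right f k]
      simp only [gI]; congr 1 <;> ring
    simp only [gI, hh]
    rw [intervalIntegral.integral_sub (f := fun w => 2 * f w - f (w + k)) (g := fun w => f (w - k))
        (((continuous_const.mul hc).sub hck).intervalIntegrable _ _)
        (hck'.intervalIntegrable _ _),
      intervalIntegral.integral_sub (f := fun w => 2 * f w) (g := fun w => f (w + k))
        ((continuous_const.mul hc).intervalIntegrable _ _)
        (hck.intervalIntegrable _ _),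
      intervalIntegral.integral_const_mul]
    rw [e1, e2]
    simp only [gI]
  have key : (∫ s in (-(1/2):ℝ)..(1/2:ℝ), gI h s) = 2 * φI f 0 - φI f k - φI f (-k) := by
    rw [intervalIntegral.integral_congr (g := fun s => 2 * gI f s - gI f (s + k) - gI f (s - k))
      (fun s _ => hgh s)]
    have hgc := gI_cont hc
    have hgk : Continuous fun s : ℝ => gI f (s + k) := hgc.comp (by continuity)
    have hgk' : Continuous fun s : ℝ => gI f (s - k) := hgc.comp (by continuity)
    rw [intervalIntegral.integral_sub (f := fun s => 2 * gI f s - gI f (s + k))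
        (g := fun s => gI f (s - k))
        (((continuous_const.mul hgc).sub hgk).intervalIntegrable _ _)
        (hgk'.intervalIntegrable _ _),
      intervalIntegral.integral_sub (f := fun s => 2 * gI f s) (g := fun s => gI f (s + k))
        ((continuous_const.mul hgc).intervalIntegrable _ _)
        (hgk.intervalIntegrable _ _),
      intervalIntegral.integral_const_mul]
    rw [← phi_zero hc, ← phi_k hc k, ← phi_neg_k hc k]
  rw [key] at hRie
  linarith

lemma sum_le (hc : Continuous f)
    (hpair : ∀ k : ℝ, 1 ≤ k → φI f k + φI f (-k) ≤ 2 * φI f 0) (r : ℕ) :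
    ∑ i ∈ Finset.range (2*r+1), φI f ((i:ℝ) - (r:ℝ)) ≤ (2*(r:ℝ)+1) * φI f 0 := by
  induction r with
  | zero => simp
  | succ n ih =>
    have h1 : 2*(n+1)+1 = (2*n+1) + 1 + 1 := by ring
    rw [h1, Finset.sum_range_succ, Finset.sum_range_succ']
    have h2 : ∑ i ∈ Finset.range (2*n+1), φI f ((↑(i+1):ℝ) - (↑(n+1):ℝ))
        = ∑ i ∈ Finset.range (2*n+1), φI f ((i:ℝ) - (n:ℝ)) := by
      refine Finset.sum_congr rfl fun i _ => ?_
      have : ((↑(i+1):ℝ) - (↑(n+1):ℝ)) = (i:ℝ) - n := by push_cast; ring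
      rw [this]
    have h3 : ((0:ℕ):ℝ) - (↑(n+1):ℝ) = -((n:ℝ)+1) := by push_cast; ring
    have h4 : ((↑(2*n+1+1):ℕ):ℝ) - (↑(n+1):ℝ) = (n:ℝ)+1 := by push_cast; ring
    rw [h2, h3, h4]
    have h5 := hpair ((n:ℝ)+1) (by have : (0:ℝ) ≤ n := Nat.cast_nonneg n; linarith)
    push_cast
    linarith

lemma stepA (hc : Continuous f) (hnn : ∀ x, 0 ≤ f x) (r : ℕ) :
    (∫ x in (-(r:ℝ))..(r:ℝ), f x) ≤ ∑ i ∈ Finset.range (2*r+1), φI f ((i:ℝ) - (r:ℝ)) := by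
  have hφrep : ∀ t : ℝ, φI f t = ∫ s in (-(1/2):ℝ)..(1/2:ℝ), gI f (t + s) := by
    intro t
    rw [intervalIntegral.integral_comp_add_left (gI f) t]
    simp only [φI]; congr 1 <;> ring
  have hsum : ∑ i ∈ Finset.range (2*r+1), φI f ((i:ℝ) - (r:ℝ))
      = ∫ s in (-(1/2):ℝ)..(1/2:ℝ), ∑ i ∈ Finset.range (2*r+1), gI f (((i:ℝ) - (r:ℝ)) + s) := by
    rw [intervalIntegral.integral_finset_sum]
    · exact Finset.sum_congr rfl fun i _ => hφrep _
    · intro i _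
      exact ((gI_cont hc).comp (by continuity)).intervalIntegrable _ _
  rw [hsum]
  have hlow : ∀ s ∈ Set.Icc (-(1/2):ℝ) (1/2:ℝ),
      (∫ x in (-(r:ℝ))..(r:ℝ), f x) ≤ ∑ i ∈ Finset.range (2*r+1), gI f (((i:ℝ) - (r:ℝ)) + s) := by
    intro s hs
    set a : ℕ → ℝ := fun i => s - r - 1/2 + (i:ℝ) with hadef
    have hsum2 : ∑ i ∈ Finset.range (2*r+1), gI f (((i:ℝ) - (r:ℝ)) + s)
        = ∫ x in (s - r - 1/2)..(s + r + 1/2), f x := by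
      calc ∑ i ∈ Finset.range (2*r+1), gI f (((i:ℝ) - (r:ℝ)) + s)
          = ∑ i ∈ Finset.range (2*r+1), ∫ x in (a i)..(a (i+1)), f x := by
            refine Finset.sum_congr rfl fun i _ => ?_
            have e3 : ((i+1:ℕ):ℝ) = (i:ℝ)+1 := by push_cast; ring
            have e1 : (i:ℝ) - r + s - 1/2 = s - r - 1/2 + (i:ℝ) := by ring
            have e2 : (i:ℝ) - r + s + 1/2 = s - r - 1/2 + ((i:ℝ)+1) := by ring
            simp only [gI, hadef, e3]
            rw [e1, e2]
        _ = ∫ x in (a 0)..(a (2*r+1)), f x :=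
            intervalIntegral.sum_integral_adjacent_intervals
              (fun i _ => hc.intervalIntegrable _ _)
        _ = ∫ x in (s - r - 1/2)..(s + r + 1/2), f x := by
            congr 1
            · simp [hadef]
            · simp only [hadef]; push_cast; ring
    rw [hsum2]
    refine intervalIntegral.integral_mono_interval (by linarith [hs.2] : s - r - 1/2 ≤ -(r:ℝ))
      (neg_le_self (Nat.cast_nonneg r)) (by linarith [hs.1])
      (ae_of_all _ hnn) (hc.intervalIntegrable _ _)
  have hmono : (∫ _ in (-(1/2):ℝ)..(1/2:ℝ), (∫ x in (-(r:ℝ))..(r:ℝ), f x)) ≤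
      ∫ s in (-(1/2):ℝ)..(1/2:ℝ), ∑ i ∈ Finset.range (2*r+1), gI f (((i:ℝ) - (r:ℝ)) + s) :=
    intervalIntegral.integral_mono_on (by norm_num : (-(1/2):ℝ) ≤ 1/2)
      intervalIntegrable_const
      ((continuous_finset_sum _ (fun i _ => (gI_cont hc).comp (by continuity))).intervalIntegrable _ _)
      hlow
  rw [intervalIntegral.integral_const, smul_eq_mul] at hmono
  norm_num at hmono
  exact hmono

lemma stepC (hc : Continuous f) (hnn : ∀ x, 0 ≤ f x) :
    φI f 0 ≤ ∫ x in (-1:ℝ)..(1:ℝ), f x := by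
  rw [phi_zero hc]
  have hbd : ∀ s ∈ Set.Icc (-(1/2):ℝ) (1/2:ℝ), gI f s ≤ ∫ x in (-1:ℝ)..(1:ℝ), f x := by
    intro s hs
    exact intervalIntegral.integral_mono_interval (by linarith [hs.1] : (-1:ℝ) ≤ s - 1/2)
      (by linarith : s - 1/2 ≤ s + 1/2) (by linarith [hs.2])
      (ae_of_all _ hnn) (hc.intervalIntegrable _ _)
  have hmono : (∫ s in (-(1/2):ℝ)..(1/2:ℝ), gI f s) ≤
      ∫ _ in (-(1/2):ℝ)..(1/2:ℝ), (∫ x in (-1:ℝ)..(1:ℝ), f x) :=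
    intervalIntegral.integral_mono_on (by norm_num : (-(1/2):ℝ) ≤ 1/2)
      ((gI_cont hc).intervalIntegrable _ _) intervalIntegrable_const hbd
  rw [intervalIntegral.integral_const, smul_eq_mul] at hmono
  norm_num at hmono
  exact hmono

end OneDimAux

open OneDimAux in
/-- For `r ∈ ℕ`, `r ≥ 1`, every continuous non-negative positive definite
`f : ℝ → ℝ` satisfies
`(1/(2r)) ∫_{-r}^r f ≤ (2 + 1/r) (1/2) ∫_{-1}^1 f`. -/
theorem one_dim_doubling_bound (r : ℕ) (hr : 1 ≤ r)
    (f : ℝ → ℝ) (hc : Continuous f) (hnn : ∀ x, 0 ≤ f x) (hpd : IsPosDefR1 f) :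
    (1 / (2 * (r : ℝ))) * ∫ x in Set.Icc (-(r : ℝ)) (r : ℝ), f x ≤
      (2 + 1 / (r : ℝ)) * ((1 / 2) * ∫ x in Set.Icc (-1 : ℝ) 1, f x) := by
  have hr' : (1:ℝ) ≤ r := by exact_mod_cast hr
  have hIr : (∫ x in Set.Icc (-(r:ℝ)) (r:ℝ), f x) = ∫ x in (-(r:ℝ))..(r:ℝ), f x := by
    rw [intervalIntegral.integral_of_le (by linarith : -(r:ℝ) ≤ r),
      MeasureTheory.integral_Icc_eq_integral_Ioc]
  have hI1 : (∫ x in Set.Icc (-1:ℝ) 1, f x) = ∫ x in (-1:ℝ)..(1:ℝ), f x := by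
    rw [intervalIntegral.integral_of_le (by norm_num : (-1:ℝ) ≤ 1),
      MeasureTheory.integral_Icc_eq_integral_Ioc]
  rw [hIr, hI1]
  have h1 := stepA hc hnn r
  have h2 := sum_le hc (fun k hk => pair hc hpd hk) r
  have h3 := stepC hc hnn
  have hchain : (∫ x in (-(r:ℝ))..(r:ℝ), f x) ≤ (2*(r:ℝ)+1) * ∫ x in (-1:ℝ)..(1:ℝ), f x := by
    have h4 : (2*(r:ℝ)+1) * φI f 0 ≤ (2*(r:ℝ)+1) * ∫ x in (-1:ℝ)..(1:ℝ), f x := by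
      apply mul_le_mul_of_nonneg_left h3 (by linarith)
    linarith
  have hrpos : (0:ℝ) < r := by linarith
  have hfac : (0:ℝ) ≤ 1 / (2*(r:ℝ)) := by positivity
  have := mul_le_mul_of_nonneg_left hchain hfac
  calc (1 / (2 * (r : ℝ))) * ∫ x in (-(r:ℝ))..(r:ℝ), f x
      ≤ (1 / (2 * (r : ℝ))) * ((2*(r:ℝ)+1) * ∫ x in (-1:ℝ)..(1:ℝ), f x) := this
    _ = (2 + 1 / (r : ℝ)) * ((1 / 2) * ∫ x in (-1:ℝ)..(1:ℝ), f x) := by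
        have hr0 : (r:ℝ) ≠ 0 := by positivity
        have hco : 1/(2*(r:ℝ)) * (2*(r:ℝ)+1) = (2 + 1/(r:ℝ)) * (1/2) := by
          field_simp
        rw [← mul_assoc, hco, mul_assoc]
end
end

section
/- For every natural number r ≥ 1, the sharp constant C_1([-1,1],[-r,r]) satisfies 2 - 1/r ≤ C_1([-1,1],[-r,r]) ≤ 2 + 1/r. -/
open MeasureTheory Complex Pointwise

noncomputable section

open Finset Filter Topology

namespace Aux

variable {f : ℝ → ℝ}

lemma posdef_even (hf : IsPosDefR1 f) (x : ℝ) : f (-x) = f x := by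
  rcases eq_or_ne x 0 with rfl | hx
  · simp
  have h2 := (hf {0, x} (fun y => if y = 0 then 1 else Complex.I)).2
  rw [Finset.sum_pair hx.symm, Finset.sum_pair hx.symm, Finset.sum_pair hx.symm] at h2
  simp only [if_pos rfl, if_neg hx, sub_zero, zero_sub, sub_self, map_one, Complex.conj_I,
    one_mul, mul_one, if_true, eq_self_iff_true] at h2
  simp only [Complex.add_im, Complex.mul_im, Complex.ofReal_re, Complex.ofReal_im,
    Complex.one_re, Complex.one_im, Complex.I_re, Complex.I_im, Complex.neg_im, Complex.neg_re,
    Complex.mul_re] at h2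
  norm_num at h2
  linarith

lemma posdef_le (hf : IsPosDefR1 f) (x : ℝ) : f x ≤ f 0 := by
  rcases eq_or_ne x 0 with rfl | hx
  · simp
  have h1 := (hf {0, x} (fun y => if y = 0 then 1 else -1)).1
  rw [Finset.sum_pair hx.symm, Finset.sum_pair hx.symm, Finset.sum_pair hx.symm] at h1
  simp only [if_pos rfl, if_neg hx, sub_zero, zero_sub, sub_self, map_one, map_neg,
    one_mul, mul_one, mul_neg, neg_mul, neg_neg, if_true, eq_self_iff_true] at h1
  simp only [Complex.add_re, Complex.neg_re, Complex.ofReal_re, map_one, one_mul] at h1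
  norm_num at h1
  have he := posdef_even hf x
  linarith

/-- primitive of f -/
def Prim (f : ℝ → ℝ) (x : ℝ) : ℝ := ∫ t in (0:ℝ)..x, f t


lemma prim_sub (hc : Continuous f) (a b : ℝ) :
    Prim f b - Prim f a = ∫ t in a..b, f t := by
  rw [Prim, Prim]
  exact intervalIntegral.integral_interval_sub_left (hc.intervalIntegrable _ _)
    (hc.intervalIntegrable _ _)

lemma prim_mono (hc : Continuous f) (h0 : ∀ x, 0 ≤ f x) : Monotone (Prim f) := by
  intro a b hab
  have h := prim_sub hc a b
  have : 0 ≤ ∫ t in a..b, f t :=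
    intervalIntegral.integral_nonneg hab fun x _ => h0 x
  linarith

lemma prim_cont (hc : Continuous f) : Continuous (Prim f) :=
  intervalIntegral.continuous_primitive (fun a b => hc.intervalIntegrable a b) 0

lemma II_of_bdd {φ : ℝ → ℝ} (hm : Measurable φ) {C : ℝ} (hb : ∀ x, |φ x| ≤ C) (a b : ℝ) :
    IntervalIntegrable φ volume a b := by
  rw [intervalIntegrable_iff]
  refine MeasureTheory.Integrable.mono' (g := fun _ => C) ?_ hm.aestronglyMeasurable ?_
  · exact integrableOn_const measure_Ioc_lt_top.ne
  · exact Filter.Eventually.of_forall fun x => by simpa [Real.norm_eq_abs] using hb x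

lemma step_eq {g : ℤ → ℝ} {C : ℝ} (hb : ∀ m, |g m| ≤ C) {n : ℕ} (hn : 0 < n) :
    ∫ u in (0:ℝ)..1, g ⌊(n:ℝ) * u⌋ = (∑ i ∈ Finset.range n, g i) / n := by
  have hnR : (0:ℝ) < n := Nat.cast_pos.2 hn
  have hmeas : Measurable fun u : ℝ => g ⌊(n:ℝ) * u⌋ :=
    (measurable_of_countable g).comp ((measurable_const.mul measurable_id).floor)
  have hint : ∀ a b : ℝ, IntervalIntegrable (fun u : ℝ => g ⌊(n:ℝ) * u⌋) volume a b :=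
    fun a b => II_of_bdd hmeas (fun x => hb _) a b
  have key : ∀ i : ℕ, ∫ u in ((i:ℝ)/n)..(((i+1:ℕ):ℝ)/n), g ⌊(n:ℝ) * u⌋ = g i / n := by
    intro i
    have hle : ((i:ℝ))/n ≤ (((i+1:ℕ):ℝ))/n := by
      apply div_le_div_of_nonneg_right ?_ hnR.le
      push_cast; linarith
    rw [intervalIntegral.integral_of_le hle, MeasureTheory.integral_Ioc_eq_integral_Ioo,
      MeasureTheory.setIntegral_congr_fun measurableSet_Ioo
        (g := fun _ : ℝ => g i) ?_, MeasureTheory.setIntegral_const]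
    · rw [measureReal_def, Real.volume_Ioo]
      rw [show (((i+1:ℕ):ℝ))/n - (i:ℝ)/n = 1/n by push_cast; field_simp; ring]
      rw [ENNReal.toReal_ofReal (by positivity)]
      rw [smul_eq_mul]; ring
    · intro u hu
      have h1 : (i:ℝ) < (n:ℝ) * u := by
        have := hu.1
        calc (i:ℝ) = (n:ℝ) * ((i:ℝ)/n) := by field_simp
        _ < (n:ℝ) * u := by exact mul_lt_mul_of_pos_left this hnR
      have h2 : (n:ℝ) * u < (i:ℝ) + 1 := by
        have := hu.2
        calc (n:ℝ) * u < (n:ℝ) * ((((i+1:ℕ):ℝ))/n) := mul_lt_mul_of_pos_left this hnR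
        _ = (i:ℝ) + 1 := by push_cast; field_simp
      have : ⌊(n:ℝ) * u⌋ = (i : ℤ) := by
        rw [Int.floor_eq_iff]
        constructor
        · exact_mod_cast h1.le
        · push_cast; exact h2
      simp only [this]
  have hsum : ∑ i ∈ Finset.range n, (g i / (n:ℝ)) =
      ∫ u in (((0:ℕ):ℝ)/n)..(((n:ℕ):ℝ)/n), g ⌊(n:ℝ) * u⌋ := by
    rw [← intervalIntegral.sum_integral_adjacent_intervals
      (a := fun i : ℕ => ((i:ℕ):ℝ)/n) (fun k _ => hint _ _)]
    exact Finset.sum_congr rfl fun i _ => (key i).symm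
  rw [show ((0:ℕ):ℝ)/n = (0:ℝ) by simp, show ((n:ℕ):ℝ)/n = (1:ℝ) by field_simp] at hsum
  rw [← hsum, Finset.sum_div]

lemma floor_div_tendsto (v : ℝ) :
    Tendsto (fun n : ℕ => ((⌊(n:ℝ) * v⌋ : ℝ))/n) atTop (𝓝 v) := by
  have h : Tendsto (fun n : ℕ => ((⌊(n:ℝ) * v⌋ : ℝ))/n - v) atTop (𝓝 0) := by
    have hb : ∀ᶠ n : ℕ in atTop, ‖((⌊(n:ℝ) * v⌋ : ℝ))/n - v‖ ≤ 1/(n:ℝ) := by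
      filter_upwards [eventually_ge_atTop 1] with n hn
      have hnR : (0:ℝ) < n := by exact_mod_cast hn
      have h1 : (n:ℝ) * v - 1 ≤ (⌊(n:ℝ) * v⌋ : ℝ) := by
        have := Int.sub_one_lt_floor ((n:ℝ) * v); linarith
      have h2 : (⌊(n:ℝ) * v⌋ : ℝ) ≤ (n:ℝ) * v := Int.floor_le _
      have heq : ((⌊(n:ℝ) * v⌋ : ℝ))/n - v = ((⌊(n:ℝ) * v⌋ : ℝ) - (n:ℝ)*v)/n := by
        field_simp
      rw [Real.norm_eq_abs, heq, abs_div, abs_of_pos hnR, div_le_div_iff₀ hnR hnR]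
      have : |(⌊(n:ℝ) * v⌋ : ℝ) - (n:ℝ)*v| ≤ 1 := by
        rw [abs_le]; constructor <;> linarith
      nlinarith [this, hnR]
    exact squeeze_zero_norm' hb tendsto_one_div_atTop_nhds_zero_nat
  have := h.add_const v
  simpa using this

def Sd (f : ℝ → ℝ) (t : ℝ) (n : ℕ) : ℝ :=
  ∑ i ∈ Finset.range n, ∑ j ∈ Finset.range n, f (t + i/n - j/n)

def Hc (f : ℝ → ℝ) (t : ℝ) : ℝ := ∫ u in (0:ℝ)..1, (Prim f (t+u) - Prim f (t+u-1))

lemma tendsto_Sd (hc : Continuous f) (h0 : ∀ x, 0 ≤ f x) (hle : ∀ x, f x ≤ f 0) (t : ℝ) :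
    Tendsto (fun n : ℕ => Sd f t n / (n:ℝ)^2) atTop (𝓝 (Hc f t)) := by
  have habs : ∀ x, |f x| ≤ f 0 := fun x => abs_le.2 ⟨by linarith [h0 x, h0 0], hle x⟩
  set Fn : ℕ → ℝ → ℝ :=
    fun n u => ∫ v in (0:ℝ)..1, f (t + ((⌊(n:ℝ)*u⌋:ℝ))/n - ((⌊(n:ℝ)*v⌋:ℝ))/n) with hFn
  have hFnbd : ∀ (n : ℕ) (u : ℝ), ‖Fn n u‖ ≤ f 0 := by
    intro n u
    have := intervalIntegral.norm_integral_le_of_norm_le_const (C := f 0) (a := (0:ℝ)) (b := 1)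
      (f := fun v => f (t + ((⌊(n:ℝ)*u⌋:ℝ))/n - ((⌊(n:ℝ)*v⌋:ℝ))/n))
      (fun v _ => by simpa [Real.norm_eq_abs] using habs _)
    simpa using this
  have hinner : ∀ u : ℝ, Tendsto (fun n => Fn n u) atTop
      (𝓝 (Prim f (t+u) - Prim f (t+u-1))) := by
    intro u
    have hDu : Prim f (t+u) - Prim f (t+u-1) = ∫ v in (0:ℝ)..1, f ((t+u) - v) := by
      rw [intervalIntegral.integral_comp_sub_left (fun v => f v) (t+u)]
      rw [prim_sub hc]
      norm_num
    rw [hDu]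
    apply intervalIntegral.tendsto_integral_filter_of_dominated_convergence
      (bound := fun _ => f 0)
    · refine Eventually.of_forall fun n => ?_
      exact ((measurable_of_countable
          (fun z : ℤ => f (t + ((⌊(n:ℝ)*u⌋:ℝ))/n - ((z:ℝ))/n))).comp
          ((measurable_const.mul measurable_id).floor)).aestronglyMeasurable
    · exact Eventually.of_forall fun n => ae_of_all _ fun v _ => by
        simpa [Real.norm_eq_abs] using habs _
    · exact intervalIntegrable_const
    · refine ae_of_all _ fun v _ => ?_
      have harg : Tendsto (fun n : ℕ => t + ((⌊(n:ℝ)*u⌋:ℝ))/n - ((⌊(n:ℝ)*v⌋:ℝ))/n)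
          atTop (𝓝 (t + u - v)) :=
        (tendsto_const_nhds.add (floor_div_tendsto u)).sub (floor_div_tendsto v)
      exact (hc.tendsto _).comp harg
  have houter : Tendsto (fun n => ∫ u in (0:ℝ)..1, Fn n u) atTop (𝓝 (Hc f t)) := by
    apply intervalIntegral.tendsto_integral_filter_of_dominated_convergence
      (bound := fun _ => f 0)
    · refine Eventually.of_forall fun n => ?_
      exact ((measurable_of_countable
          (fun z : ℤ => ∫ v in (0:ℝ)..1, f (t + ((z:ℝ))/n - ((⌊(n:ℝ)*v⌋:ℝ))/n))).comp
          ((measurable_const.mul measurable_id).floor)).aestronglyMeasurable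
    · exact Eventually.of_forall fun n => ae_of_all _ fun u _ => hFnbd n u
    · exact intervalIntegrable_const
    · exact ae_of_all _ fun u _ => hinner u
  have heq : ∀ᶠ n : ℕ in atTop, ∫ u in (0:ℝ)..1, Fn n u = Sd f t n / (n:ℝ)^2 := by
    filter_upwards [eventually_ge_atTop 1] with n hn
    have hn0 : 0 < n := hn
    have hstep1 : ∫ u in (0:ℝ)..1, Fn n u =
        (∑ i ∈ Finset.range n,
          ∫ v in (0:ℝ)..1, f (t + ((i:ℤ):ℝ)/n - ((⌊(n:ℝ)*v⌋:ℝ))/n)) / n := by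
      exact step_eq (g := fun m : ℤ => ∫ v in (0:ℝ)..1, f (t + ((m:ℝ))/n - ((⌊(n:ℝ)*v⌋:ℝ))/n))
        (C := f 0) (fun m => by
          have := hFnbd 0 0
          have h2 := intervalIntegral.norm_integral_le_of_norm_le_const (C := f 0) (a := (0:ℝ))
            (b := 1) (f := fun v => f (t + ((m:ℝ))/n - ((⌊(n:ℝ)*v⌋:ℝ))/n))
            (fun v _ => by simpa [Real.norm_eq_abs] using habs _)
          simpa [Real.norm_eq_abs] using h2) hn0
    have hstep2 : ∀ i : ℕ,
        (∫ v in (0:ℝ)..1, f (t + ((i:ℤ):ℝ)/n - ((⌊(n:ℝ)*v⌋:ℝ))/n)) =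
        (∑ j ∈ Finset.range n, f (t + (i:ℝ)/n - (j:ℝ)/n)) / n := by
      intro i
      have := step_eq (g := fun m : ℤ => f (t + ((i:ℝ))/n - ((m:ℝ))/n)) (C := f 0)
        (fun m => habs _) hn0
      rw [show ((i:ℤ):ℝ) = (i:ℝ) by push_cast; ring]
      rw [this]
      exact congrArg (· / (n:ℝ)) (Finset.sum_congr rfl fun j _ => by norm_num)
    rw [hstep1]
    rw [Finset.sum_congr rfl fun i _ => hstep2 i]
    rw [Sd]
    rw [← Finset.sum_div, div_div, sq]
  exact houter.congr' heq

lemma posdef_Sd (hpd : IsPosDefR1 f) {k n : ℕ} (hk : 1 ≤ k) (hn : 1 ≤ n) :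
    Sd f (k:ℝ) n + Sd f (-(k:ℝ)) n ≤ 2 * Sd f 0 n := by
  have hnR : (0:ℝ) < n := by exact_mod_cast hn
  set c : ℝ → ℂ := fun x => if x < 1 then 1 else -1 with hcdef
  set φ : ℕ → ℝ := fun i => (i:ℝ)/n with hφ
  set ψ : ℕ → ℝ := fun i => (k:ℝ) + (i:ℝ)/n with hψ
  have hφlt : ∀ i ∈ Finset.range n, φ i < 1 := by
    intro i hi
    rw [hφ]
    rw [div_lt_one hnR]
    exact_mod_cast Finset.mem_range.1 hi
  have hφnn : ∀ i ∈ Finset.range n, 0 ≤ φ i := fun i _ => by positivity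
  have hψge : ∀ i ∈ Finset.range n, 1 ≤ ψ i := by
    intro i hi
    rw [hψ]
    have : (1:ℝ) ≤ (k:ℝ) := by exact_mod_cast hk
    have : (0:ℝ) ≤ (i:ℝ)/n := by positivity
    linarith
  have hinjφ : ∀ x ∈ Finset.range n, ∀ y ∈ Finset.range n, φ x = φ y → x = y := by
    intro x _ y _ h
    simp only [hφ] at h
    rw [div_eq_div_iff hnR.ne' hnR.ne'] at h
    have : (x:ℝ) = y := mul_right_cancel₀ hnR.ne' h
    exact_mod_cast this
  have hinjψ : ∀ x ∈ Finset.range n, ∀ y ∈ Finset.range n, ψ x = ψ y → x = y := by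
    intro x hx y hy h
    rw [hψ] at h
    exact hinjφ x hx y hy (by rw [hφ]; dsimp only; linarith [add_left_cancel h])
  set A : Finset ℝ := (Finset.range n).image φ with hA
  set B : Finset ℝ := (Finset.range n).image ψ with hB
  have hd : Disjoint A B := by
    rw [Finset.disjoint_left]
    intro x hx hx'
    rw [hA, Finset.mem_image] at hx
    rw [hB, Finset.mem_image] at hx'
    obtain ⟨i, hi, rfl⟩ := hx
    obtain ⟨j, hj, hj'⟩ := hx'
    have h1 := hφlt i hi
    have h2 := hψge j hj
    rw [hj'] at h2
    linarith
  have h := (hpd (A ∪ B) c).1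
  have reindex : ∀ (α β : ℕ → ℝ),
      (∀ x ∈ Finset.range n, ∀ y ∈ Finset.range n, α x = α y → x = y) →
      (∀ x ∈ Finset.range n, ∀ y ∈ Finset.range n, β x = β y → x = y) →
      ∀ (T : ℝ → ℝ → ℂ),
      ∑ a ∈ (Finset.range n).image α, ∑ b ∈ (Finset.range n).image β, T a b
        = ∑ i ∈ Finset.range n, ∑ j ∈ Finset.range n, T (α i) (β j) := by
    intro α β hα hβ T
    rw [Finset.sum_image hα]
    exact Finset.sum_congr rfl fun i _ => Finset.sum_image hβ
  have hsplit : ∑ a ∈ A ∪ B, ∑ b ∈ A ∪ B, c a * (starRingEnd ℂ) (c b) * ((f (a-b) : ℝ) : ℂ)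
      = (∑ a ∈ A, ∑ b ∈ A, c a * (starRingEnd ℂ) (c b) * ((f (a-b) : ℝ) : ℂ))
      + (∑ a ∈ A, ∑ b ∈ B, c a * (starRingEnd ℂ) (c b) * ((f (a-b) : ℝ) : ℂ))
      + ((∑ a ∈ B, ∑ b ∈ A, c a * (starRingEnd ℂ) (c b) * ((f (a-b) : ℝ) : ℂ))
      + (∑ a ∈ B, ∑ b ∈ B, c a * (starRingEnd ℂ) (c b) * ((f (a-b) : ℝ) : ℂ))) := by
    rw [Finset.sum_union hd]
    congr 1 <;> · rw [← Finset.sum_add_distrib]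
                  exact Finset.sum_congr rfl fun a _ => Finset.sum_union hd
  have hAA : ∑ a ∈ A, ∑ b ∈ A, c a * (starRingEnd ℂ) (c b) * ((f (a-b) : ℝ) : ℂ)
      = ((Sd f 0 n : ℝ) : ℂ) := by
    rw [hA, reindex φ φ hinjφ hinjφ, Sd]
    push_cast
    refine Finset.sum_congr rfl fun i hi => Finset.sum_congr rfl fun j hj => ?_
    have harg : φ i - φ j = 0 + (i:ℝ)/n - (j:ℝ)/n := by simp only [hφ]; try ring
    rw [hcdef]
    simp only [if_pos (hφlt i hi), if_pos (hφlt j hj), map_one, one_mul, harg]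
  have hBB : ∑ a ∈ B, ∑ b ∈ B, c a * (starRingEnd ℂ) (c b) * ((f (a-b) : ℝ) : ℂ)
      = ((Sd f 0 n : ℝ) : ℂ) := by
    rw [hB, reindex ψ ψ hinjψ hinjψ, Sd]
    push_cast
    refine Finset.sum_congr rfl fun i hi => Finset.sum_congr rfl fun j hj => ?_
    have harg : ψ i - ψ j = 0 + (i:ℝ)/n - (j:ℝ)/n := by simp only [hψ]; try ring
    rw [hcdef]
    simp only [if_neg (not_lt.2 (hψge i hi)), if_neg (not_lt.2 (hψge j hj)), map_neg, map_one,
      neg_mul, neg_neg, one_mul, harg]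
  have hAB : ∑ a ∈ A, ∑ b ∈ B, c a * (starRingEnd ℂ) (c b) * ((f (a-b) : ℝ) : ℂ)
      = -((Sd f (-(k:ℝ)) n : ℝ) : ℂ) := by
    rw [hA, hB, reindex φ ψ hinjφ hinjψ, Sd]
    push_cast
    simp only [← Finset.sum_neg_distrib]
    refine Finset.sum_congr rfl fun i hi => Finset.sum_congr rfl fun j hj => ?_
    have harg : φ i - ψ j = -(k:ℝ) + (i:ℝ)/n - (j:ℝ)/n := by simp only [hφ, hψ]; try ring
    rw [hcdef]
    simp only [if_pos (hφlt i hi), if_neg (not_lt.2 (hψge j hj)), map_neg, map_one,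
      one_mul, mul_neg, neg_neg, neg_mul, harg]
  have hBA : ∑ a ∈ B, ∑ b ∈ A, c a * (starRingEnd ℂ) (c b) * ((f (a-b) : ℝ) : ℂ)
      = -((Sd f (k:ℝ) n : ℝ) : ℂ) := by
    rw [hA, hB, reindex ψ φ hinjψ hinjφ, Sd]
    push_cast
    simp only [← Finset.sum_neg_distrib]
    refine Finset.sum_congr rfl fun i hi => Finset.sum_congr rfl fun j hj => ?_
    have harg : ψ i - φ j = (k:ℝ) + (i:ℝ)/n - (j:ℝ)/n := by simp only [hφ, hψ]; try ring
    rw [hcdef]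
    simp only [if_neg (not_lt.2 (hψge i hi)), if_pos (hφlt j hj), map_one, mul_one,
      neg_mul, one_mul, neg_neg, mul_neg, harg]
  rw [hsplit, hAA, hAB, hBA, hBB] at h
  have : ((Sd f 0 n : ℝ) : ℂ) + -((Sd f (-(k:ℝ)) n : ℝ) : ℂ)
      + (-((Sd f (k:ℝ) n : ℝ) : ℂ) + ((Sd f 0 n : ℝ) : ℂ))
      = (((Sd f 0 n + Sd f 0 n - Sd f (-(k:ℝ)) n - Sd f (k:ℝ) n : ℝ)) : ℂ) := by
    push_cast
    ring
  rw [this, Complex.ofReal_re] at h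
  linarith

lemma prim_zero : Prim f 0 = 0 := intervalIntegral.integral_same

lemma prim_neg (hc : Continuous f) (hev : ∀ x, f (-x) = f x) (x : ℝ) :
    Prim f (-x) = - Prim f x := by
  have h := intervalIntegral.integral_comp_neg (a := (0:ℝ)) (b := x) (f := f)
  have h2 : (∫ t in (0:ℝ)..x, f (-t)) = ∫ t in (0:ℝ)..x, f t :=
    intervalIntegral.integral_congr fun t _ => hev t
  rw [h2] at h
  have h3 := prim_sub hc (-x) (-0)
  have h4 := prim_sub hc 0 x
  rw [neg_zero] at h3 h
  have h5 : Prim f 0 - Prim f (-x) = Prim f x - Prim f 0 := by rw [h3, h4, ← h]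
  have h6 : Prim f 0 = 0 := prim_zero
  linarith [h5]

lemma Hc_even (hc : Continuous f) (hev : ∀ x, f (-x) = f x) (t : ℝ) :
    Hc f (-t) = Hc f t := by
  have h1 : ∀ u : ℝ, Prim f (-t+u) - Prim f (-t+u-1)
      = Prim f (t+(1-u)) - Prim f (t+(1-u)-1) := by
    intro u
    have a1 : Prim f (-t+u) = -Prim f (t-u) := by
      rw [show -t+u = -(t-u) by ring, prim_neg hc hev]
    have a2 : Prim f (-t+u-1) = -Prim f (t+(1-u)) := by
      rw [show -t+u-1 = -(t+(1-u)) by ring, prim_neg hc hev]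
    rw [a1, a2, show t+(1-u)-1 = t-u by ring]
    ring
  rw [Hc, intervalIntegral.integral_congr (g := fun u => Prim f (t+(1-u)) - Prim f (t+(1-u)-1))
    (fun u _ => h1 u)]
  have := intervalIntegral.integral_comp_sub_left
    (fun w => Prim f (t+w) - Prim f (t+w-1)) 1 (a := (0:ℝ)) (b := 1)
  simp only [sub_self, sub_zero] at this
  rw [this, Hc]

lemma Hc_pair (hc : Continuous f) (h0 : ∀ x, 0 ≤ f x) (hpd : IsPosDefR1 f)
    {k : ℕ} (hk : 1 ≤ k) : Hc f (k:ℝ) + Hc f (-(k:ℝ)) ≤ 2 * Hc f 0 := by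
  have hle := posdef_le hpd
  have h1 := tendsto_Sd hc h0 hle ((k:ℕ):ℝ)
  have h2 := tendsto_Sd hc h0 hle (-(k:ℝ))
  have h3 := tendsto_Sd hc h0 hle 0
  have hT : Tendsto (fun n : ℕ => (2 * Sd f 0 n - Sd f (k:ℝ) n - Sd f (-(k:ℝ)) n)/(n:ℝ)^2)
      atTop (𝓝 (2 * Hc f 0 - Hc f (k:ℝ) - Hc f (-(k:ℝ)))) := by
    have := ((h3.const_mul 2).sub h1).sub h2
    simpa [mul_div_assoc, sub_div] using this
  have hpos : ∀ᶠ n : ℕ in atTop,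
      0 ≤ (2 * Sd f 0 n - Sd f (k:ℝ) n - Sd f (-(k:ℝ)) n)/(n:ℝ)^2 := by
    filter_upwards [eventually_ge_atTop 1] with n hn
    have := posdef_Sd hpd hk hn
    have hn2 : (0:ℝ) ≤ (n:ℝ)^2 := by positivity
    apply div_nonneg _ hn2
    linarith
  have := ge_of_tendsto hT hpos
  linarith

lemma Hc_le (hc : Continuous f) (h0 : ∀ x, 0 ≤ f x) (hpd : IsPosDefR1 f)
    (k : ℕ) : Hc f (k:ℝ) ≤ Hc f 0 ∧ Hc f (-(k:ℝ)) ≤ Hc f 0 := by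
  rcases Nat.eq_zero_or_pos k with rfl | hk
  · norm_num
  have hev := posdef_even hpd
  have h1 := Hc_pair hc h0 hpd hk
  have h2 : Hc f (-(k:ℝ)) = Hc f (k:ℝ) := Hc_even hc hev (k:ℝ)
  constructor <;> linarith

lemma main_upper (hc : Continuous f) (h0 : ∀ x, 0 ≤ f x) (hpd : IsPosDefR1 f)
    {r : ℕ} (hr : 1 ≤ r) :
    (∫ t in (-(r:ℝ))..(r:ℝ), f t) ≤ (2*(r:ℝ)+1) * ∫ t in (-1:ℝ)..1, f t := by
  have hmono := prim_mono hc h0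
  have hcontPrim := prim_cont hc (f := f)
  -- each Hc continuous-integrable helper
  have hHint : ∀ s : ℝ, IntervalIntegrable (fun u : ℝ => Prim f (s+u) - Prim f (s+u-1))
      volume 0 1 := by
    intro s
    exact (((hcontPrim.comp (continuous_const.add continuous_id)).sub
      (hcontPrim.comp ((continuous_const.add continuous_id).sub
        continuous_const)))).intervalIntegrable 0 1
  -- Step 1 : ∫_{-r}^{r} f ≤ ∑_{i<2r+1} Hc f (i - r)
  have hsum : ∑ i ∈ Finset.range (2*r+1), Hc f ((i:ℝ) - r)
      = ∫ u in (0:ℝ)..1, (Prim f (u + r) - Prim f (u - r - 1)) := by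
    simp only [Hc]
    rw [← intervalIntegral.integral_finset_sum (μ := volume) (a := (0:ℝ)) (b := (1:ℝ))
      (s := Finset.range (2*r+1))
      (f := fun (i:ℕ) (u:ℝ) => Prim f ((i:ℝ) - r + u) - Prim f ((i:ℝ) - r + u - 1))
      (fun i _ => hHint ((i:ℝ) - r))]
    refine intervalIntegral.integral_congr fun u _ => ?_
    have := Finset.sum_range_sub (fun i : ℕ => Prim f (u - (r:ℝ) - 1 + i)) (2*r+1)
    have hterm : ∀ i ∈ Finset.range (2*r+1),
        Prim f (((i:ℝ) - r) + u) - Prim f (((i:ℝ) - r) + u - 1)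
        = Prim f (u - (r:ℝ) - 1 + ((i+1:ℕ):ℝ)) - Prim f (u - (r:ℝ) - 1 + (i:ℝ)) := by
      intro i _
      congr 1 <;> · congr 1; push_cast; ring
    rw [Finset.sum_congr rfl hterm, this]
    push_cast
    congr 1 <;> · congr 1; ring
  have step1 : (∫ t in (-(r:ℝ))..(r:ℝ), f t) ≤ ∑ i ∈ Finset.range (2*r+1), Hc f ((i:ℝ) - r) := by
    rw [hsum]
    have hconst : (∫ t in (-(r:ℝ))..(r:ℝ), f t)
        = ∫ u in (0:ℝ)..1, (fun _ : ℝ => ∫ t in (-(r:ℝ))..(r:ℝ), f t) u := by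
      simp
    rw [hconst]
    refine intervalIntegral.integral_mono_on (by norm_num) intervalIntegrable_const
      (((hcontPrim.comp (continuous_id.add continuous_const)).sub
        (hcontPrim.comp ((continuous_id.sub continuous_const).sub
          continuous_const))).intervalIntegrable 0 1) ?_
    intro u hu
    obtain ⟨hu0, hu1⟩ := hu
    rw [← prim_sub hc]
    have l1 : Prim f (u - r - 1) ≤ Prim f (-(r:ℝ)) := hmono (by linarith)
    have l2 : Prim f (r:ℝ) ≤ Prim f (u + r) := hmono (by linarith)
    linarith
  -- Step 2
  have step2 : ∑ i ∈ Finset.range (2*r+1), Hc f ((i:ℝ) - r) ≤ (2*(r:ℝ)+1) * Hc f 0 := by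
    have : ∀ i ∈ Finset.range (2*r+1), Hc f ((i:ℝ) - r) ≤ Hc f 0 := by
      intro i hi
      rcases le_or_gt (r:ℕ) i with h | h
      · have : ((i:ℝ) - r) = ((i - r : ℕ) : ℝ) := by
          push_cast [Nat.cast_sub h]; ring
        rw [this]
        exact (Hc_le hc h0 hpd _).1
      · have : ((i:ℝ) - r) = -(((r - i : ℕ) : ℝ)) := by
          push_cast [Nat.cast_sub h.le]; ring
        rw [this]
        exact (Hc_le hc h0 hpd _).2
    calc ∑ i ∈ Finset.range (2*r+1), Hc f ((i:ℝ) - r)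
        ≤ ∑ _i ∈ Finset.range (2*r+1), Hc f 0 := Finset.sum_le_sum this
      _ = (2*(r:ℝ)+1) * Hc f 0 := by
          rw [Finset.sum_const, Finset.card_range]
          push_cast
          ring
  -- Step 3
  have step3 : Hc f 0 ≤ ∫ t in (-1:ℝ)..1, f t := by
    rw [Hc]
    have hconst : (∫ t in (-1:ℝ)..1, f t)
        = ∫ u in (0:ℝ)..1, (fun _ : ℝ => ∫ t in (-1:ℝ)..1, f t) u := by simp
    rw [hconst]
    refine intervalIntegral.integral_mono_on (by norm_num) (hHint 0)
      intervalIntegrable_const ?_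
    intro u hu
    obtain ⟨hu0, hu1⟩ := hu
    rw [← prim_sub hc]
    have l1 : Prim f (-1:ℝ) ≤ Prim f (0+u-1) := hmono (by linarith)
    have l2 : Prim f (0+u) ≤ Prim f 1 := hmono (by linarith)
    linarith
  have h2r : (0:ℝ) ≤ 2*(r:ℝ)+1 := by positivity
  calc (∫ t in (-(r:ℝ))..(r:ℝ), f t) ≤ ∑ i ∈ Finset.range (2*r+1), Hc f ((i:ℝ) - r) := step1
    _ ≤ (2*(r:ℝ)+1) * Hc f 0 := step2
    _ ≤ (2*(r:ℝ)+1) * ∫ t in (-1:ℝ)..1, f t := by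
        apply mul_le_mul_of_nonneg_left step3 h2r

/-- the exponential character -/
def Ech (lam : ℝ) (j : ℕ) (x : ℝ) : ℂ := Complex.exp (((lam * j * x : ℝ) : ℂ) * Complex.I)

/-- the Fejér-type kernel -/
def fLB (lam : ℝ) (N : ℕ) (x : ℝ) : ℝ :=
  Complex.normSq (∑ j ∈ Finset.range N, Ech lam j x)

lemma Ech_conj (lam : ℝ) (j : ℕ) (x : ℝ) :
    (starRingEnd ℂ) (Ech lam j x) = Complex.exp (-(((lam * j * x : ℝ) : ℂ) * Complex.I)) := by
  rw [Ech, ← Complex.exp_conj]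
  congr 1
  simp [Complex.conj_I, mul_comm]

lemma Ech_sub (lam : ℝ) (j : ℕ) (a b : ℝ) :
    Ech lam j (a - b) = Ech lam j a * (starRingEnd ℂ) (Ech lam j b) := by
  rw [Ech_conj, Ech, Ech, ← Complex.exp_add]
  congr 1
  push_cast
  ring

lemma Ech_mul_conj (lam : ℝ) (j k : ℕ) (x : ℝ) :
    Ech lam j x * (starRingEnd ℂ) (Ech lam k x)
      = Complex.exp (((lam * j * x - lam * k * x : ℝ) : ℂ) * Complex.I) := by
  rw [Ech_conj, Ech, ← Complex.exp_add]
  congr 1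
  push_cast
  ring

lemma fLB_cont (lam : ℝ) (N : ℕ) : Continuous (fLB lam N) := by
  apply Complex.continuous_normSq.comp
  apply continuous_finset_sum
  intro j _
  exact Complex.continuous_exp.comp
    ((Complex.continuous_ofReal.comp
      ((continuous_const).mul continuous_id)).mul continuous_const)

lemma fLB_nonneg (lam : ℝ) (N : ℕ) (x : ℝ) : 0 ≤ fLB lam N x := Complex.normSq_nonneg _

lemma fLB_zero (lam : ℝ) (N : ℕ) : fLB lam N 0 = (N:ℝ)^2 := by
  rw [fLB]
  have : ∀ j ∈ Finset.range N, Ech lam j 0 = 1 := by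
    intro j _
    rw [Ech]
    norm_num
  rw [Finset.sum_congr rfl this, Finset.sum_const, Finset.card_range]
  simp [Complex.normSq]
  ring

lemma fLB_eq_sum (lam : ℝ) (N : ℕ) (x : ℝ) :
    fLB lam N x = ∑ j ∈ Finset.range N, ∑ k ∈ Finset.range N,
      Real.cos (lam * j * x - lam * k * x) := by
  rw [fLB]
  have h1 : (Complex.normSq (∑ j ∈ Finset.range N, Ech lam j x) : ℂ)
      = (∑ j ∈ Finset.range N, Ech lam j x)
        * (starRingEnd ℂ) (∑ j ∈ Finset.range N, Ech lam j x) :=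
    (Complex.mul_conj _).symm
  have h2 : ((∑ j ∈ Finset.range N, Ech lam j x)
        * (starRingEnd ℂ) (∑ j ∈ Finset.range N, Ech lam j x)).re
      = ∑ j ∈ Finset.range N, ∑ k ∈ Finset.range N,
          Real.cos (lam * j * x - lam * k * x) := by
    rw [map_sum, Finset.sum_mul_sum]
    rw [Complex.re_sum]
    refine Finset.sum_congr rfl fun j _ => ?_
    rw [Complex.re_sum]
    refine Finset.sum_congr rfl fun k _ => ?_
    rw [Ech_mul_conj, Complex.exp_ofReal_mul_I_re]
  calc Complex.normSq (∑ j ∈ Finset.range N, Ech lam j x)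
      = ((Complex.normSq (∑ j ∈ Finset.range N, Ech lam j x) : ℂ)).re := by
        rw [Complex.ofReal_re]
    _ = _ := by rw [h1, h2]

lemma fLB_posdef (lam : ℝ) (N : ℕ) : IsPosDefR1 (fLB lam N) := by
  intro X c
  set S : ℕ → ℕ → ℂ := fun j k => ∑ a ∈ X, c a * Ech lam j a * (starRingEnd ℂ) (Ech lam k a)
    with hS
  have key : ∑ a ∈ X, ∑ b ∈ X, c a * (starRingEnd ℂ) (c b) * ((fLB lam N (a - b) : ℝ) : ℂ)
      = ∑ j ∈ Finset.range N, ∑ k ∈ Finset.range N, ((Complex.normSq (S j k) : ℝ) : ℂ) := by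
    have hterm : ∀ a b : ℝ, c a * (starRingEnd ℂ) (c b) * ((fLB lam N (a - b) : ℝ) : ℂ)
        = ∑ j ∈ Finset.range N, ∑ k ∈ Finset.range N,
          (c a * Ech lam j a * (starRingEnd ℂ) (Ech lam k a))
          * (starRingEnd ℂ) (c b * Ech lam j b * (starRingEnd ℂ) (Ech lam k b)) := by
      intro a b
      rw [fLB, ← Complex.mul_conj (∑ j ∈ Finset.range N, Ech lam j (a - b)), map_sum,
        Finset.sum_mul_sum]
      rw [Finset.mul_sum]
      refine Finset.sum_congr rfl fun j _ => ?_
      rw [Finset.mul_sum]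
      refine Finset.sum_congr rfl fun k _ => ?_
      rw [Ech_sub lam j a b, Ech_sub lam k a b]
      simp only [map_mul, map_mul, RingHom.map_mul, starRingEnd_self_apply]
      ring
    have hsum : ∑ a ∈ X, ∑ b ∈ X, c a * (starRingEnd ℂ) (c b) * ((fLB lam N (a - b) : ℝ) : ℂ)
        = ∑ j ∈ Finset.range N, ∑ k ∈ Finset.range N, S j k * (starRingEnd ℂ) (S j k) := by
      rw [Finset.sum_congr rfl fun a _ => Finset.sum_congr rfl fun b _ => hterm a b]
      -- reorder sums
      rw [Finset.sum_congr rfl fun a _ => Finset.sum_comm]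
      rw [Finset.sum_comm]
      refine Finset.sum_congr rfl fun j _ => ?_
      rw [Finset.sum_congr rfl fun a _ => Finset.sum_comm]
      rw [Finset.sum_comm]
      refine Finset.sum_congr rfl fun k _ => ?_
      rw [hS]
      dsimp only
      rw [map_sum, Finset.sum_mul_sum]
    rw [hsum]
    refine Finset.sum_congr rfl fun j _ => Finset.sum_congr rfl fun k _ => ?_
    rw [Complex.mul_conj]
  constructor
  · rw [key, Complex.re_sum]
    refine Finset.sum_nonneg fun j _ => ?_
    rw [Complex.re_sum]
    refine Finset.sum_nonneg fun k _ => ?_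
    rw [Complex.ofReal_re]
    exact Complex.normSq_nonneg _
  · rw [key, Complex.im_sum]
    refine Finset.sum_eq_zero fun j _ => ?_
    rw [Complex.im_sum]
    exact Finset.sum_eq_zero fun k _ => Complex.ofReal_im _

lemma integral_fLB {lam A : ℝ} (hlam : 0 < lam) (N : ℕ)
    (hzero : ∀ m : ℤ, Real.sin (lam * m * A) = 0) :
    ∫ x in (-A)..A, fLB lam N x = 2*A*N := by
  rw [intervalIntegral.integral_congr (g := fun x => ∑ j ∈ Finset.range N, ∑ k ∈ Finset.range N,
    Real.cos (lam * j * x - lam * k * x)) (fun x _ => fLB_eq_sum lam N x)]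
  have hcont : ∀ (j k : ℕ), Continuous fun x : ℝ => Real.cos (lam * j * x - lam * k * x) := by
    intro j k
    exact Real.continuous_cos.comp (((continuous_const.mul continuous_id).sub
      (continuous_const.mul continuous_id)))
  rw [intervalIntegral.integral_finset_sum
    (fun j _ => ((continuous_finset_sum _ (fun k _ => hcont j k)).intervalIntegrable _ _))]
  rw [Finset.sum_congr rfl fun j _ => intervalIntegral.integral_finset_sum
    (fun k _ => (hcont j k).intervalIntegrable _ _)]
  have hterm : ∀ j ∈ Finset.range N, ∀ k ∈ Finset.range N,
      (∫ x in (-A)..A, Real.cos (lam * j * x - lam * k * x))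
        = if j = k then 2*A else 0 := by
    intro j _ k _
    rcases eq_or_ne j k with rfl | hjk
    · rw [if_pos rfl]
      rw [intervalIntegral.integral_congr (g := fun _ => (1:ℝ))
        (fun x _ => by rw [sub_self, Real.cos_zero])]
      simp
      ring
    · rw [if_neg hjk]
      set cc : ℝ := lam * j - lam * k with hcc
      have hcne : cc ≠ 0 := by
        rw [hcc, sub_ne_zero]
        intro hh
        exact hjk (by exact_mod_cast mul_left_cancel₀ hlam.ne' hh)
      rw [intervalIntegral.integral_congr (g := fun x => Real.cos (cc * x))
        (fun x _ => by rw [hcc]; congr 1; ring)]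
      rw [intervalIntegral.integral_comp_mul_left (fun y => Real.cos y) hcne]
      rw [integral_cos]
      have hsin : Real.sin (cc * A) = 0 := by
        have := hzero ((j:ℤ) - k)
        rw [show lam * (((j:ℤ) - k : ℤ):ℝ) * A = cc * A by rw [hcc]; push_cast; ring] at this
        exact this
      rw [show cc * -A = -(cc * A) by ring, Real.sin_neg, hsin]
      simp
  rw [Finset.sum_congr rfl fun j hj => Finset.sum_congr rfl fun k hk => hterm j hj k hk]
  rw [Finset.sum_congr rfl fun j hj => Finset.sum_ite_eq (Finset.range N) j (fun _ => 2*A)]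
  rw [Finset.sum_congr rfl fun j hj => if_pos hj]
  rw [Finset.sum_const, Finset.card_range]
  push_cast
  ring

lemma fLB_even (lam : ℝ) (N : ℕ) (x : ℝ) : fLB lam N (-x) = fLB lam N x := by
  rw [fLB, fLB]
  have : ∀ j ∈ Finset.range N, Ech lam j (-x) = (starRingEnd ℂ) (Ech lam j x) := by
    intro j _
    rw [Ech_conj, Ech]
    congr 1
    push_cast
    ring
  rw [Finset.sum_congr rfl this, ← map_sum]
  exact Complex.normSq_conj _

lemma fLB_bound {lam : ℝ} (N : ℕ) {x : ℝ} (h : Real.sin (lam * x / 2) ≠ 0) :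
    fLB lam N x ≤ 1 / Real.sin (lam * x / 2)^2 := by
  set θ : ℝ := lam * x with hθ
  set z : ℂ := Complex.exp ((θ:ℂ) * Complex.I) with hz
  have hE : ∀ j : ℕ, Ech lam j x = z ^ j := by
    intro j
    rw [Ech, hz, ← Complex.exp_nat_mul]
    congr 1
    rw [hθ]
    push_cast
    ring
  have hre : (z - 1).re = Real.cos θ - 1 := by
    simp [hz, Complex.exp_ofReal_mul_I_re]
  have him : (z - 1).im = Real.sin θ := by
    simp [hz, Complex.exp_ofReal_mul_I_im]
  have hnormSq_z1 : Complex.normSq (z - 1) = 4 * Real.sin (θ/2)^2 := by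
    rw [Complex.normSq_apply, hre, him]
    have hs := Real.sin_sq_eq_half_sub (θ/2)
    rw [show 2*(θ/2) = θ by ring] at hs
    nlinarith [Real.sin_sq_add_cos_sq θ]
  have hsinpos : 0 < Real.sin (θ/2)^2 := by
    have : Real.sin (θ/2) ≠ 0 := by
      rw [hθ]
      exact (by rw [show lam * x / 2 = θ/2 by rw [hθ]] at h; exact h)
    positivity
  have hz1 : z ≠ 1 := by
    intro hz1
    rw [hz1] at hnormSq_z1
    simp at hnormSq_z1
    nlinarith
  have hgeom : ∑ j ∈ Finset.range N, Ech lam j x = (z^N - 1)/(z - 1) := by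
    rw [Finset.sum_congr rfl fun j _ => hE j]
    exact geom_sum_eq hz1 N
  rw [fLB, hgeom, map_div₀, hnormSq_z1]
  have hnum : Complex.normSq (z^N - 1) ≤ 4 := by
    have habs : ‖z^N - 1‖ ≤ 2 := by
      calc ‖z^N - 1‖ ≤ ‖z^N‖ + ‖(1:ℂ)‖ := by
            exact (norm_sub_le _ _)
        _ = 2 := by
            rw [norm_pow, hz, Complex.norm_exp_ofReal_mul_I, one_pow, norm_one]
            norm_num
    calc Complex.normSq (z^N - 1) = ‖z^N - 1‖^2 := (Complex.sq_norm _).symm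
      _ ≤ 4 := by nlinarith [norm_nonneg (z^N - 1)]
  rw [div_le_div_iff₀ (by positivity) hsinpos]
  nlinarith

end Aux

set_option maxHeartbeats 1000000 in
open Aux in
/-- For `r ∈ ℕ`, `r ≥ 1`, the sharp constant `C_1([-1,1],[-r,r])` satisfies
`2 - 1/r ≤ C_1 ≤ 2 + 1/r`. -/
theorem one_dim_sharp_constant_bounds (r : ℕ) (hr : 1 ≤ r) :
    2 - 1 / (r : ℝ) ≤
      doublingConst1 (Set.Icc (-1 : ℝ) 1) (Set.Icc (-(r : ℝ)) (r : ℝ)) ∧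
    doublingConst1 (Set.Icc (-1 : ℝ) 1) (Set.Icc (-(r : ℝ)) (r : ℝ)) ≤
      2 + 1 / (r : ℝ) := by
  have hrR : (1:ℝ) ≤ (r:ℝ) := by exact_mod_cast hr
  have hrpos : (0:ℝ) < r := by linarith
  have hvolU : (volume (Set.Icc (-1 : ℝ) 1)).toReal = 2 := by
    rw [Real.volume_Icc]
    rw [ENNReal.toReal_ofReal (by norm_num)]
    norm_num
  have hvolV : (volume (Set.Icc (-(r : ℝ)) (r : ℝ))).toReal = 2*r := by
    rw [Real.volume_Icc]
    rw [ENNReal.toReal_ofReal (by linarith)]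
    ring
  have hsetU : ∀ {g : ℝ → ℝ}, (∫ x in Set.Icc (-1:ℝ) 1, g x) = ∫ x in (-1:ℝ)..1, g x := by
    intro g
    rw [MeasureTheory.integral_Icc_eq_integral_Ioc, ← intervalIntegral.integral_of_le (by norm_num)]
  have hsetV : ∀ {g : ℝ → ℝ},
      (∫ x in Set.Icc (-(r:ℝ)) (r:ℝ), g x) = ∫ x in (-(r:ℝ))..(r:ℝ), g x := by
    intro g
    rw [MeasureTheory.integral_Icc_eq_integral_Ioc,
      ← intervalIntegral.integral_of_le (by linarith)]
  -- upper bound for all elements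
  have hub : ∀ x ∈ ratioSet1 (Set.Icc (-1 : ℝ) 1) (Set.Icc (-(r : ℝ)) (r : ℝ)),
      x ≤ 2 + 1/(r:ℝ) := by
    rintro x ⟨f, hc, h0, hpd, -, hIU, rfl⟩
    rw [hsetU] at hIU
    rw [hvolU, hvolV, hsetU, hsetV]
    set IU : ℝ := ∫ x in (-1:ℝ)..1, f x with hIUdef
    set IV : ℝ := ∫ x in (-(r:ℝ))..(r:ℝ), f x with hIVdef
    have hkey : IV ≤ (2*(r:ℝ)+1) * IU := main_upper hc h0 hpd hr
    have hIVnn : 0 ≤ IV := intervalIntegral.integral_nonneg (by linarith) (fun x _ => h0 x)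
    have h2a : (0:ℝ) < 2*(r:ℝ) := by linarith
    rw [div_le_iff₀ (by positivity : (0:ℝ) < 2⁻¹ * IU)]
    have e : (2 + 1/(r:ℝ)) * (2⁻¹ * IU) = ((2*(r:ℝ)+1) * IU) / (2*(r:ℝ)) := by
      field_simp
    rw [e, inv_mul_eq_div, div_le_div_iff₀ h2a h2a]
    nlinarith [hkey]
  have hBdd : BddAbove (ratioSet1 (Set.Icc (-1 : ℝ) 1) (Set.Icc (-(r : ℝ)) (r : ℝ))) :=
    ⟨2 + 1/(r:ℝ), fun x hx => hub x hx⟩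
  constructor
  · -- lower bound
    set lam : ℝ := (2*(r:ℝ) - 1) * Real.pi / r with hlam_def
    have h2r1 : (0:ℝ) < 2*(r:ℝ) - 1 := by linarith
    have hpi := Real.pi_pos
    have hlam : 0 < lam := by
      rw [hlam_def]
      positivity
    set half : ℝ := (r:ℝ)/(2*(r:ℝ)-1) with hhalf_def
    have hhalfpos : 0 < half := by rw [hhalf_def]; positivity
    have hhalf1 : half ≤ 1 := by
      rw [hhalf_def, div_le_one h2r1]
      linarith
    set C : ℝ := 1 / Real.sin (Real.pi/(2*(r:ℝ)))^2 with hC_def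
    have hsinapos : 0 < Real.sin (Real.pi/(2*(r:ℝ))) := by
      apply Real.sin_pos_of_pos_of_lt_pi
      · positivity
      · rw [div_lt_iff₀ (by linarith)]
        nlinarith
    have hCpos : 0 < C := by rw [hC_def]; positivity
    -- pointwise bound on [half, 1]
    have hptbd : ∀ N : ℕ, ∀ x ∈ Set.Icc half 1, fLB lam N x ≤ C := by
      intro N x hx
      obtain ⟨hx1, hx2⟩ := hx
      have hlh : lam * half = Real.pi := by
        rw [hlam_def, hhalf_def]
        field_simp
      have ha1 : Real.pi/2 ≤ lam * x / 2 := by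
        have hmono : lam * half ≤ lam * x := mul_le_mul_of_nonneg_left hx1 hlam.le
        linarith
      have ha2 : lam * x / 2 ≤ Real.pi - Real.pi/(2*(r:ℝ)) := by
        have h1 : lam * x ≤ lam := by
          have := mul_le_mul_of_nonneg_left hx2 hlam.le
          linarith
        have h2 : lam / 2 = Real.pi - Real.pi/(2*(r:ℝ)) := by
          rw [hlam_def]
          field_simp
        linarith
      have hsinb : Real.sin (Real.pi/(2*(r:ℝ))) ≤ Real.sin (lam * x / 2) := by
        rw [← Real.sin_pi_sub (lam * x / 2)]
        apply Real.sin_le_sin_of_le_of_le_pi_div_two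
        · have : (0:ℝ) ≤ Real.pi/(2*(r:ℝ)) := by positivity
          linarith
        · linarith
        · linarith
      have hne : Real.sin (lam * x / 2) ≠ 0 := (lt_of_lt_of_le hsinapos hsinb).ne'
      calc fLB lam N x ≤ 1 / Real.sin (lam * x / 2)^2 := fLB_bound N hne
        _ ≤ C := by
            rw [hC_def]
            apply one_div_le_one_div_of_le (pow_pos hsinapos 2)
            nlinarith
    -- integrals
    have hIV : ∀ N : ℕ, ∫ x in (-(r:ℝ))..(r:ℝ), fLB lam N x = 2*(r:ℝ)*N := by
      intro N
      apply integral_fLB hlam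
      intro m
      have : lam * (m:ℝ) * (r:ℝ) = ((2*(r:ℤ)-1)*m : ℤ) * Real.pi := by
        rw [hlam_def]
        push_cast
        field_simp
      rw [this, Real.sin_int_mul_pi]
    have hImid : ∀ N : ℕ, ∫ x in (-half)..half, fLB lam N x = 2*half*N := by
      intro N
      apply integral_fLB hlam
      intro m
      have : lam * (m:ℝ) * half = (m : ℤ) * Real.pi := by
        rw [hlam_def, hhalf_def]
        push_cast
        field_simp
      rw [this, Real.sin_int_mul_pi]
    have htail : ∀ N : ℕ, ∫ x in half..1, fLB lam N x ≤ C := by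
      intro N
      calc ∫ x in half..1, fLB lam N x ≤ ∫ _x in half..1, C := by
            apply intervalIntegral.integral_mono_on hhalf1
              ((fLB_cont lam N).intervalIntegrable _ _) intervalIntegrable_const
            exact hptbd N
        _ = (1 - half) * C := by
            rw [intervalIntegral.integral_const, smul_eq_mul]
        _ ≤ C := by nlinarith
    have htail' : ∀ N : ℕ, ∫ x in (-1:ℝ)..(-half), fLB lam N x = ∫ x in half..1, fLB lam N x := by
      intro N
      have h1 : (∫ x in half..(1:ℝ), fLB lam N (-x)) = ∫ x in (-1:ℝ)..(-half), fLB lam N x :=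
        intervalIntegral.integral_comp_neg (a := half) (b := 1) (f := fLB lam N)
      rw [intervalIntegral.integral_congr (g := fLB lam N) (fun x _ => fLB_even lam N x)] at h1
      exact h1.symm
    have hsplit : ∀ N : ℕ, ∫ x in (-1:ℝ)..1, fLB lam N x
        = (∫ x in (-1:ℝ)..(-half), fLB lam N x) + (∫ x in (-half)..half, fLB lam N x)
          + (∫ x in half..1, fLB lam N x) := by
      intro N
      have i1 : IntervalIntegrable (fLB lam N) volume (-1) (-half) :=
        (fLB_cont lam N).intervalIntegrable _ _
      have i2 : IntervalIntegrable (fLB lam N) volume (-half) half :=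
        (fLB_cont lam N).intervalIntegrable _ _
      have i3 : IntervalIntegrable (fLB lam N) volume half 1 :=
        (fLB_cont lam N).intervalIntegrable _ _
      rw [intervalIntegral.integral_add_adjacent_intervals i1 i2,
        intervalIntegral.integral_add_adjacent_intervals (i1.trans i2) i3]
    have htailnn : ∀ N : ℕ, 0 ≤ ∫ x in half..1, fLB lam N x := fun N =>
      intervalIntegral.integral_nonneg hhalf1 (fun x _ => fLB_nonneg lam N x)
    have hIUlb : ∀ N : ℕ, 2*half*(N:ℝ) ≤ ∫ x in (-1:ℝ)..1, fLB lam N x := by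
      intro N
      rw [hsplit N, htail' N]
      have := htailnn N
      have := hImid N
      linarith
    have hIUub : ∀ N : ℕ, (∫ x in (-1:ℝ)..1, fLB lam N x) ≤ 2*half*(N:ℝ) + 2*C := by
      intro N
      rw [hsplit N, htail' N]
      have := htail N
      have := hImid N
      linarith
    -- membership and value
    have hmem : ∀ N : ℕ, 1 ≤ N →
        (2*(N:ℝ)) / (∫ x in (-1:ℝ)..1, fLB lam N x)
          ∈ ratioSet1 (Set.Icc (-1 : ℝ) 1) (Set.Icc (-(r : ℝ)) (r : ℝ)) := by
      intro N hN
      have hNR : (1:ℝ) ≤ (N:ℝ) := by exact_mod_cast hN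
      have hIUpos : 0 < ∫ x in (-1:ℝ)..1, fLB lam N x := by
        have := hIUlb N
        nlinarith
      refine ⟨fLB lam N, fLB_cont lam N, fLB_nonneg lam N, fLB_posdef lam N, ?_, ?_, ?_⟩
      · intro h
        have h0 := congrFun h 0
        rw [fLB_zero] at h0
        simp at h0
        nlinarith
      · rw [hsetU]
        exact hIUpos
      · rw [hvolU, hvolV, hsetU, hsetV, hIV N]
        rw [show (2*(r:ℝ))⁻¹ * (2*(r:ℝ)*N) = (N:ℝ) by field_simp]
        rw [div_eq_div_iff hIUpos.ne'
          (mul_pos (by norm_num : (0:ℝ) < (2:ℝ)⁻¹) hIUpos).ne']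
        ring
    -- limit argument
    have hG : Tendsto (fun N : ℕ => 2 / (2*half + 2*C/(N:ℝ))) atTop (𝓝 (2 - 1/(r:ℝ))) := by
      have hden : Tendsto (fun N : ℕ => 2*half + 2*C/(N:ℝ)) atTop (𝓝 (2*half)) := by
        have h2 : Tendsto (fun N : ℕ => 2*C/(N:ℝ)) atTop (𝓝 0) :=
          tendsto_const_div_atTop_nhds_zero_nat (2*C)
        have h3 := h2.const_add (2*half)
        simpa using h3
      have hnum : Tendsto (fun _ : ℕ => (2:ℝ)) atTop (𝓝 2) := tendsto_const_nhds
      have := hnum.div hden (by positivity)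
      have heq : 2 / (2*half) = 2 - 1/(r:ℝ) := by
        rw [hhalf_def]
        field_simp
      rw [heq] at this
      exact this
    apply le_of_tendsto hG
    filter_upwards [eventually_ge_atTop 1] with N hN
    have hNR : (1:ℝ) ≤ (N:ℝ) := by exact_mod_cast hN
    have hIUpos : 0 < ∫ x in (-1:ℝ)..1, fLB lam N x := by
      have := hIUlb N; nlinarith
    have hstep : 2 / (2*half + 2*C/(N:ℝ))
        ≤ (2*(N:ℝ)) / (∫ x in (-1:ℝ)..1, fLB lam N x) := by
      have hNpos : (0:ℝ) < N := by linarith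
      have hd1 : (0:ℝ) < 2*half + 2*C/(N:ℝ) := by
        have h1 : (0:ℝ) < 2*C/(N:ℝ) := div_pos (by linarith) hNpos
        linarith
      have hd2 : (0:ℝ) < 2*half*(N:ℝ) + 2*C := by
        have h1 : (0:ℝ) < 2*half*(N:ℝ) := by
          have := mul_pos (mul_pos (by norm_num : (0:ℝ) < 2) hhalfpos) hNpos
          linarith [this]
        linarith
      have e1 : 2 / (2*half + 2*C/(N:ℝ)) = (2*(N:ℝ)) / (2*half*(N:ℝ) + 2*C) := by
        rw [div_eq_div_iff hd1.ne' hd2.ne']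
        field_simp
      rw [e1]
      exact div_le_div_of_nonneg_left (by linarith : (0:ℝ) ≤ 2*(N:ℝ)) hIUpos (hIUub N)
    exact le_trans hstep (le_csSup hBdd (hmem N hN))
  · -- upper bound
    apply Real.sSup_le hub
    positivity
end
end

section
/- Let H ⊂ ℝⁿ be a 0-symmetric convex body, X a finite set, and V ⊂ ℝⁿ a set with V + H ⊆ H + X. Then the function S(x) = |X|⁻¹ ∑_{a∈X} φ_H(x-a), where φ_H = |H|⁻¹ χ_H * χ_H, satisfies S(x) ≥ 1/|X| for every x ∈ V. -/
open MeasureTheory Complex Pointwise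

noncomputable section

/-- The normalized self-convolution of the indicator of `H`. -/
def phi {n : ℕ} (H : Set (Fin n → ℝ)) : (Fin n → ℝ) → ℝ := fun x =>
  (volume H).toReal⁻¹ *
    ∫ y, Set.indicator H (fun _ => (1 : ℝ)) (x - y) *
         Set.indicator H (fun _ => (1 : ℝ)) y

/-- If `V + H ⊆ H + X` then `S(x) = |X|⁻¹ ∑_{a∈X} φ_H(x-a) ≥ 1/|X|` on `V`. -/
theorem shifted_sum_lower_bound {n : ℕ} (H : Set (Fin n → ℝ))
    (hH : IsSymConvexBody H) (X : Finset (Fin n → ℝ)) (V : Set (Fin n → ℝ))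
    (hcov : V + H ⊆ H + (X : Set (Fin n → ℝ))) :
    ∀ x ∈ V, 1 / (X.card : ℝ) ≤ (X.card : ℝ)⁻¹ * ∑ a ∈ X, phi H (x - a) := by
  intro x hx
  obtain ⟨hconv, hcomp, hint, hsym⟩ := hH
  have hHmeas : MeasurableSet H := hcomp.isClosed.measurableSet
  have hHfin : volume H < ⊤ := hcomp.measure_lt_top
  have hHpos : 0 < volume H :=
    lt_of_lt_of_le (isOpen_interior.measure_pos volume hint) (measure_mono interior_subset)
  -- X is nonempty
  obtain ⟨h0, hh0⟩ := hint
  have hxh : x + h0 ∈ H + (X : Set (Fin n → ℝ)) :=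
    hcov (Set.add_mem_add hx (interior_subset hh0))
  obtain ⟨u0, hu0, a0, ha0, -⟩ := hxh
  have hcard : (0:ℝ) < X.card := by
    exact_mod_cast (Finset.card_pos.mpr ⟨a0, ha0⟩)
  -- the integrands
  set f : (Fin n → ℝ) → (Fin n → ℝ) → ℝ := fun a y =>
    Set.indicator H (fun _ => (1:ℝ)) (x - a - y) * Set.indicator H (fun _ => (1:ℝ)) y with hf
  have hfeq : ∀ a, f a = Set.indicator ((fun y => x - a - y) ⁻¹' H ∩ H) (fun _ => (1:ℝ)) := by
    intro a; funext y
    by_cases h1 : x - a - y ∈ H <;> by_cases h2 : y ∈ H <;>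
      simp [f, Set.indicator_apply, h1, h2]
  have hmeas : ∀ a : Fin n → ℝ, MeasurableSet ((fun y => x - a - y) ⁻¹' H ∩ H) := by
    intro a
    exact (hHmeas.preimage (measurable_const.sub measurable_id)).inter hHmeas
  have hint_a : ∀ a : Fin n → ℝ, Integrable (f a) := by
    intro a
    rw [hfeq a, integrable_indicator_iff (hmeas a)]
    exact (integrableOn_const_iff).mpr
      (Or.inr (lt_of_le_of_lt (measure_mono Set.inter_subset_right) hHfin))
  have hint_H : Integrable (Set.indicator H (fun _ => (1:ℝ))) := by
    rw [integrable_indicator_iff hHmeas]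
    exact (integrableOn_const_iff).mpr (Or.inr hHfin)
  have hfnn : ∀ a y, 0 ≤ f a y := fun a y =>
    mul_nonneg (Set.indicator_nonneg (fun _ _ => zero_le_one) _)
      (Set.indicator_nonneg (fun _ _ => zero_le_one) _)
  -- pointwise lower bound
  have hlow : ∀ y, Set.indicator H (fun _ => (1:ℝ)) y ≤ ∑ a ∈ X, f a y := by
    intro y
    by_cases hy : y ∈ H
    · have hmy : -y ∈ H := by rw [hsym]; exact Set.neg_mem_neg.mpr hy
      obtain ⟨u, hu, a, ha, hsum⟩ := hcov (Set.add_mem_add hx hmy)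
      have hxy : x - a - y ∈ H := by
        have h : u + a = x + -y := hsum
        have hu' : u = x + -y - a := by rw [← h]; abel
        have : x - a - y = u := by rw [hu']; abel
        rw [this]; exact hu
      calc Set.indicator H (fun _ => (1:ℝ)) y = 1 := Set.indicator_of_mem hy _
        _ = f a y := by
            simp [f, Set.indicator_of_mem hy, Set.indicator_of_mem hxy]
        _ ≤ ∑ a ∈ X, f a y := Finset.single_le_sum (fun b _ => hfnn b y) ha
    · rw [Set.indicator_of_notMem hy]
      exact Finset.sum_nonneg (fun b _ => hfnn b y)
  have hintS : ∫ y, Set.indicator H (fun _ => (1:ℝ)) y = (volume H).toReal := by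
    exact integral_indicator_one (μ := volume) hHmeas
  have key : (volume H).toReal ≤ ∑ a ∈ X, ∫ y, f a y := by
    rw [← hintS, ← integral_finset_sum X (fun a _ => hint_a a)]
    exact integral_mono hint_H (integrable_finset_sum X (fun a _ => hint_a a))
      hlow
  have hvol : (0:ℝ) < (volume H).toReal := ENNReal.toReal_pos hHpos.ne' hHfin.ne
  have h1 : 1 ≤ ∑ a ∈ X, phi H (x - a) := by
    have heq : ∑ a ∈ X, phi H (x - a) = (volume H).toReal⁻¹ * ∑ a ∈ X, ∫ y, f a y := by
      rw [Finset.mul_sum]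
      rfl
    rw [heq]
    calc (1:ℝ) = (volume H).toReal⁻¹ * (volume H).toReal := (inv_mul_cancel₀ hvol.ne').symm
      _ ≤ (volume H).toReal⁻¹ * ∑ a ∈ X, ∫ y, f a y :=
          mul_le_mul_of_nonneg_left key (inv_nonneg.mpr hvol.le)
  calc 1 / (X.card : ℝ) = (X.card : ℝ)⁻¹ * 1 := by rw [one_div, mul_one]
    _ ≤ (X.card : ℝ)⁻¹ * ∑ a ∈ X, phi H (x - a) :=
        mul_le_mul_of_nonneg_left h1 (inv_nonneg.mpr hcard.le)
end
end
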